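/- arXiv:1703.00766 — 4 statements merged into one kernel-verified Lean document; each statement's English description precedes it below -/
import Mathlib

section
/- Let R be a commutative Noetherian ring, 𝔞 an ideal of R, and M an R-module. Then M is weakly Laskerian (i.e., every quotient of M has finitely many associated primes) if and only if there exists a finitely generated submodule N of M such that the support of M/N is a finite set. -/
open CategoryTheory

universe u

section StmtAuxiliary

namespace StmtAux

open Submodule

variable {R : Type*} [CommRing R] {M : Type*} [AddCommGroup M] [Module R M]

theorem mem_ass_iff' [IsNoetherianRing R] {p : Ideal R} :
    p ∈ associatedPrimes R M ↔ p.IsPrime ∧ ∃ x : M, p = (span R {x}).annihilator := by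
  rw [AssociatedPrimes.mem_iff, isAssociatedPrime_iff]
  have : ∀ x : M, colon (⊥ : Submodule R M) {x} = (span R {x}).annihilator := fun x => by
    ext r; simp [mem_colon_singleton, mem_annihilator_span_singleton]
  simp only [this]

/-- Extension lemma: Ass(M) ⊆ Ass(U) ∪ Ass(M/U). -/
theorem ass_subset_union [IsNoetherianRing R] (U : Submodule R M) :
    associatedPrimes R M ⊆ associatedPrimes R U ∪ associatedPrimes R (M ⧸ U) := by
  intro p hp0
  obtain ⟨hp, x, hx⟩ := mem_ass_iff'.mp hp0
  by_cases h : ∃ r : R, r • x ∈ U ∧ r ∉ p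
  · obtain ⟨r, hrU, hrp⟩ := h
    left
    refine mem_ass_iff'.mpr ⟨hp, ⟨r • x, hrU⟩, ?_⟩
    ext a
    rw [mem_annihilator_span_singleton]
    constructor
    · intro (ha : a ∈ p)
      have hax : a • x = 0 := by
        have := hx ▸ ha
        rwa [mem_annihilator_span_singleton] at this
      ext
      show a • (r • x) = 0
      rw [smul_comm a r, hax, smul_zero]
    · intro ha
      have : (a * r) • x = 0 := by
        have := congrArg Subtype.val ha
        simpa [mul_smul, mul_comm a r, smul_comm r a] using this
      have har : a * r ∈ p := by
        rw [hx, mem_annihilator_span_singleton]; exact this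
      rcases hp.mem_or_mem har with h1 | h1
      · exact h1
      · exact absurd h1 hrp
  · right
    push_neg at h
    refine mem_ass_iff'.mpr ⟨hp, Submodule.Quotient.mk x, ?_⟩
    ext a
    rw [mem_annihilator_span_singleton, ← Submodule.Quotient.mk_smul,
      Submodule.Quotient.mk_eq_zero]
    constructor
    · intro (ha : a ∈ p)
      have : a • x = 0 := by
        have := hx ▸ ha
        rwa [mem_annihilator_span_singleton] at this
      rw [this]; exact U.zero_mem
    · intro ha
      exact h a ha
open Submodule
variable {R : Type*} [CommRing R] {M : Type*} [AddCommGroup M] [Module R M]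

/-- Ass of a cyclic module R∙x with prime annihilator p is ⊆ {p}. -/
theorem ass_cyclic [IsNoetherianRing R] {x : M} {p : Ideal R} (hp : p.IsPrime)
    (hx : p = (span R {x}).annihilator) :
    associatedPrimes R (span R {x} : Submodule R M) ⊆ {p} := by
  intro q hq0
  obtain ⟨hq, ⟨y, hy⟩, hyq⟩ := mem_ass_iff'.mp hq0
  obtain ⟨r, rfl⟩ := mem_span_singleton.mp hy
  have hann : ∀ a : R, a ∈ q ↔ a • (r • x) = 0 := by
    intro a
    rw [hyq, mem_annihilator_span_singleton]
    constructor
    · intro h; exact congrArg Subtype.val h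
    · intro h; ext; exact h
  have hpq : p ≤ q := by
    intro a ha
    rw [hann]
    have hax : a • x = 0 := by
      have := hx ▸ ha; rwa [mem_annihilator_span_singleton] at this
    rw [smul_comm, hax, smul_zero]
  have hrp : r ∉ p := by
    intro hr
    have : r • x = 0 := by
      have := hx ▸ hr; rwa [mem_annihilator_span_singleton] at this
    have : (1 : R) ∈ q := by rw [hann]; simp [this]
    exact hq.ne_top (Ideal.eq_top_of_unit_mem _ _ 1 (by simpa using this) (by simp))
  have hqp : q ≤ p := by
    intro a ha
    rw [hann] at ha
    have : a * r ∈ p := by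
      rw [hx, mem_annihilator_span_singleton, mul_smul]; exact ha
    rcases hp.mem_or_mem this with h | h
    · exact h
    · exact absurd h hrp
  exact Set.mem_singleton_iff.mpr (le_antisymm hqp hpq)

/-- A Noetherian module has finitely many associated primes in each quotient. -/
theorem ass_quot_finite [IsNoetherianRing R] [IsNoetherian R M] (U : Submodule R M) :
    (associatedPrimes R (M ⧸ U)).Finite := by
  induction U using IsNoetherian.induction with
  | _ U IH =>
    by_cases hE : associatedPrimes R (M ⧸ U) = ∅
    · rw [hE]; exact Set.finite_empty
    obtain ⟨p, hp⟩ := Set.nonempty_iff_ne_empty.mpr hE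
    obtain ⟨hprime, xb, hxb⟩ := mem_ass_iff'.mp hp
    obtain ⟨x, rfl⟩ := Submodule.Quotient.mk_surjective U xb
    have hxU : x ∉ U := by
      intro hx
      apply hprime.ne_top
      rw [hxb, eq_top_iff]
      intro a _
      rw [mem_annihilator_span_singleton, ← Submodule.Quotient.mk_smul,
        Submodule.Quotient.mk_eq_zero]
      exact U.smul_mem a hx
    set U' : Submodule R M := U ⊔ span R {x} with hU'
    have hUU' : U < U' := by
      refine lt_of_le_of_ne le_sup_left ?_
      intro hEq
      exact hxU (hEq ▸ (le_sup_right (α := Submodule R M) (mem_span_singleton_self x)))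
    have key : associatedPrimes R (M ⧸ U) ⊆
        {p} ∪ associatedPrimes R (M ⧸ U') := by
      intro q hq
      have := ass_subset_union (span R {Submodule.Quotient.mk (p := U) x}) hq
      rcases this with h | h
      · exact Or.inl (ass_cyclic hprime hxb h)
      · right
        have e1 : map U.mkQ U' = span R {Submodule.Quotient.mk (p := U) x} := by
          rw [hU', Submodule.map_sup, Submodule.map_span]
          have : map U.mkQ U = ⊥ := by
            rw [eq_bot_iff]
            rintro y ⟨z, hz, rfl⟩
            simpa using (Submodule.Quotient.mk_eq_zero U).mpr hz
          rw [this, bot_sup_eq, Set.image_singleton]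
          rfl
        have e2 : ((M ⧸ U) ⧸ (map U.mkQ U')) ≃ₗ[R] M ⧸ U' :=
          quotientQuotientEquivQuotient U U' le_sup_left
        rw [← LinearEquiv.AssociatedPrimes.eq e2, e1]
        exact h
    exact Set.Finite.subset (Set.Finite.union (Set.finite_singleton p) (IH U' hUU')) key

/-- Associated primes of a Noetherian module are finite. -/
theorem ass_finite [IsNoetherianRing R] (M : Type*) [AddCommGroup M] [Module R M]
    [IsNoetherian R M] : (associatedPrimes R M).Finite := by
  have := ass_quot_finite (R := R) (M := M) ⊥
  rwa [LinearEquiv.AssociatedPrimes.eq (quotEquivOfEqBot (⊥ : Submodule R M) rfl)] at this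

/-- associated primes sit inside the support. -/
theorem ass_mem_supp [IsNoetherianRing R] {p : Ideal R} (hp : p ∈ associatedPrimes R M) :
    (⟨p, hp.isPrime⟩ : PrimeSpectrum R) ∈ Module.support R M := by
  obtain ⟨hprime, x, hx⟩ := mem_ass_iff'.mp hp
  exact Module.mem_support_iff_exists_annihilator.mpr ⟨x, le_of_eq hx.symm⟩

/-- Over a Noetherian ring, any support point contains an associated prime. -/
theorem supp_exists_ass_le [IsNoetherianRing R] {q : PrimeSpectrum R}
    (hq : q ∈ Module.support R M) : ∃ p ∈ associatedPrimes R M, p ≤ q.asIdeal := by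
  set S := q.asIdeal.primeCompl
  let Rq := Localization S
  let Mq := LocalizedModule S M
  haveI : IsNoetherianRing Rq := IsLocalization.isNoetherianRing S Rq ‹_›
  haveI : Nontrivial Mq := hq
  obtain ⟨P', hP'⟩ := associatedPrimes.nonempty Rq Mq
  obtain ⟨hP'p, y, hy⟩ := mem_ass_iff'.mp hP'
  obtain ⟨⟨m, s⟩, rfl⟩ : ∃ z : M × S, LocalizedModule.mk z.1 z.2 = y := by
    induction y using LocalizedModule.induction_on with
    | _ m s => exact ⟨⟨m, s⟩, rfl⟩
  set p : Ideal R := Ideal.comap (algebraMap R Rq) P' with hp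
  have hple : p ≤ q.asIdeal := by
    intro a ha
    by_contra hq'
    have hu : IsUnit (algebraMap R Rq a) := IsLocalization.map_units Rq (⟨a, hq'⟩ : S)
    exact hP'p.ne_top (P'.eq_top_of_isUnit_mem ha hu)
  have hpprime : p.IsPrime := Ideal.IsPrime.comap _
  -- membership translation
  have hmem : ∀ a : R, a ∈ p ↔ (algebraMap R Rq a) • (LocalizedModule.mk m s) = 0 := by
    intro a
    rw [hp, Ideal.mem_comap, hy, mem_annihilator_span_singleton]
  obtain ⟨T, hT⟩ : p.FG := IsNoetherian.noetherian p
  -- for each generator b, find c ∈ S with (c * b) • m = 0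
  have hkill : ∀ b ∈ T, ∃ c : S, (c : R) • b • m = 0 := by
    intro b hb
    have hbp : b ∈ p := hT ▸ subset_span hb
    have h0 : (LocalizedModule.mk (b • m) s : Mq) = 0 := by
      have := (hmem b).mp hbp
      rwa [algebraMap_smul, LocalizedModule.smul'_mk] at this
    rw [← LocalizedModule.zero_mk s, LocalizedModule.mk_eq] at h0
    obtain ⟨u, hu⟩ := h0
    refine ⟨u * s, ?_⟩
    have : (u : R) • (s : R) • b • m = 0 := by simp at hu; exact hu
    simpa [mul_smul] using this
  choose c hc using hkill
  classical
  set t : S := ∏ b ∈ T.attach, c b.1 b.2 with ht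
  refine ⟨p, mem_ass_iff'.mpr ⟨hpprime, t • m, ?_⟩, hple⟩
  apply le_antisymm
  · -- p ≤ annihilator
    rw [← hT, Ideal.span_le]
    intro b hb
    rw [SetLike.mem_coe, mem_annihilator_span_singleton]
    have htm : t • m = (t : R) • m := Submonoid.smul_def t m
    rw [htm]
    obtain ⟨k, hk⟩ := Finset.dvd_prod_of_mem (fun b' : {x // x ∈ T} => (c b'.1 b'.2 : R))
      (Finset.mem_attach T ⟨b, hb⟩)
    have htval : (t : R) = (c b hb : R) * k := by
      rw [ht]; push_cast [Submonoid.coe_finset_prod]; exact hk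
    have step : b • (t : R) • m = k • ((c b hb : R) • b • m) := by
      rw [smul_smul, smul_smul, smul_smul]
      congr 1
      rw [htval]; ring
    rw [step, hc b hb, smul_zero]
  · -- annihilator ≤ p
    intro a ha
    rw [mem_annihilator_span_singleton] at ha
    rw [Submonoid.smul_def] at ha
    rw [hmem, algebraMap_smul, LocalizedModule.smul'_mk, ← LocalizedModule.zero_mk s,
      LocalizedModule.mk_eq]
    refine ⟨t, ?_⟩
    have h1 : (t : R) • a • m = 0 := by
      rw [smul_comm]
      exact ha
    calc (t : R) • (s : R) • a • m = (s : R) • (t : R) • a • m := by rw [smul_comm]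
      _ = (s : R) • (0 : M) := by rw [h1]
      _ = 0 := smul_zero _
      _ = t • s • (0:M) := by simp


/-- Over a Noetherian ring, Supp M = ⋃_{p ∈ Ass M} V(p). -/
theorem supp_eq_biUnion [IsNoetherianRing R] :
    Module.support R M = ⋃ p ∈ associatedPrimes R M, PrimeSpectrum.zeroLocus (p : Set R) := by
  ext q
  simp only [Set.mem_iUnion, exists_prop]
  constructor
  · intro hq
    obtain ⟨p, hp, hple⟩ := supp_exists_ass_le hq
    exact ⟨p, hp, fun x hx => hple hx⟩
  · rintro ⟨p, hp, hle⟩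
    obtain ⟨hprime, x, hx⟩ := mem_ass_iff'.mp hp
    exact Module.mem_support_iff_exists_annihilator.mpr
      ⟨x, fun a ha => hle (by rwa [← hx] at ha)⟩

/-- Ass is controlled by support via the image of asIdeal. -/
theorem ass_finite_of_supp_finite [IsNoetherianRing R] (h : (Module.support R M).Finite) :
    (associatedPrimes R M).Finite := by
  apply Set.Finite.subset (h.image PrimeSpectrum.asIdeal)
  intro p hp
  exact ⟨⟨p, hp.isPrime⟩, ass_mem_supp hp, rfl⟩

theorem wl_of_fsf [IsNoetherianRing R] {N : Submodule R M} (hN : N.FG)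
    (hsupp : (Module.support R (M ⧸ N)).Finite) (K : Submodule R M) :
    (associatedPrimes R (M ⧸ K)).Finite := by
  set U : Submodule R (M ⧸ K) := map K.mkQ N with hU
  have hUfg : U.FG := hN.map _
  haveI : Module.Finite R U := Module.Finite.iff_fg.mpr hUfg
  haveI : IsNoetherian R U := isNoetherian_of_isNoetherianRing_of_finite R U
  have hAssU : (associatedPrimes R U).Finite := ass_finite U
  have hmapeq : map K.mkQ (K ⊔ N) = U := by
    rw [Submodule.map_sup, hU]
    have : map K.mkQ K = ⊥ := by
      rw [eq_bot_iff]
      rintro y ⟨z, hz, rfl⟩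
      simpa using (Submodule.Quotient.mk_eq_zero K).mpr hz
    rw [this, bot_sup_eq]
  have e2 : ((M ⧸ K) ⧸ U) ≃ₗ[R] M ⧸ (K ⊔ N) := by
    rw [← hmapeq]
    exact quotientQuotientEquivQuotient K (K ⊔ N) le_sup_left
  have hsupp2 : (Module.support R (M ⧸ (K ⊔ N))).Finite := by
    apply hsupp.subset
    apply Module.support_subset_of_surjective (mapQ N (K ⊔ N) LinearMap.id le_sup_right)
    intro z
    obtain ⟨x, rfl⟩ := Submodule.Quotient.mk_surjective _ z
    exact ⟨Submodule.Quotient.mk x, by simp [mapQ_apply]⟩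
  have hAssQ : (associatedPrimes R ((M ⧸ K) ⧸ U)).Finite := by
    rw [LinearEquiv.AssociatedPrimes.eq e2]
    exact ass_finite_of_supp_finite hsupp2
  exact (hAssU.union hAssQ).subset (ass_subset_union U)

/-- From a persistent associated prime with infinitely many primes above it,
produce a quotient with infinitely many associated primes. -/
theorem not_wl_of_persistent [IsNoetherianRing R] {N0 : Submodule R M} (hN0 : N0.FG)
    {p : Ideal R} (hp : p.IsPrime)
    (hinf : {q : PrimeSpectrum R | p < q.asIdeal}.Infinite)
    (hPers : ∀ N : Submodule R M, N.FG → N0 ≤ N → p ∈ associatedPrimes R (M ⧸ N)) :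
    ∃ K : Submodule R M, (associatedPrimes R (M ⧸ K)).Infinite := by
  classical
  -- the distinct primes above p
  let E := hinf.natEmbedding
  set q : ℕ → Ideal R := fun i => (E i : PrimeSpectrum R).asIdeal with hq
  have hqprime : ∀ i, (q i).IsPrime := fun i => (E i : PrimeSpectrum R).isPrime
  have hqgt : ∀ i, p < q i := fun i => (E i).2
  have hqinj : Function.Injective q := by
    intro i j hij
    have : (E i : PrimeSpectrum R) = (E j : PrimeSpectrum R) := PrimeSpectrum.ext hij
    exact E.injective (Subtype.ext this)
  -- choose g i ∈ q i \ p
  have hg : ∀ i, ∃ g : R, g ∈ q i ∧ g ∉ p := fun i => SetLike.exists_of_lt (hqgt i)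
  choose g hgq hgp using hg
  -- witness extraction
  have hwit : ∀ P : Submodule R M, P.FG → N0 ≤ P →
      ∃ w : M, ∀ r : R, r • w ∈ P ↔ r ∈ p := by
    intro P hPfg hP0
    obtain ⟨-, x, hx⟩ := mem_ass_iff'.mp (hPers P hPfg hP0)
    obtain ⟨w, rfl⟩ := Submodule.Quotient.mk_surjective P x
    refine ⟨w, fun r => ?_⟩
    rw [← Submodule.Quotient.mk_eq_zero P, Submodule.Quotient.mk_smul]
    constructor
    · intro h
      rw [hx, mem_annihilator_span_singleton]; exact h
    · intro h
      rw [hx, mem_annihilator_span_singleton] at h; exact h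
  -- recursive construction of the lists of witnesses
  have pSub_prop : ∀ l : List M, (N0 ⊔ span R {x | x ∈ l}).FG ∧
      N0 ≤ N0 ⊔ span R {x | x ∈ l} := by
    intro l
    refine ⟨Submodule.FG.sup hN0 (Submodule.fg_span l.finite_toSet), le_sup_left⟩
  let step : List M → M := fun l =>
    (hwit (N0 ⊔ span R {x | x ∈ l}) (pSub_prop l).1 (pSub_prop l).2).choose
  have step_spec : ∀ l : List M, ∀ r : R,
      r • step l ∈ N0 ⊔ span R {x | x ∈ l} ↔ r ∈ p := fun l =>
    (hwit (N0 ⊔ span R {x | x ∈ l}) (pSub_prop l).1 (pSub_prop l).2).choose_spec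
  let F : ℕ → List M := fun n => Nat.rec [] (fun _ l => l ++ [step l]) n
  have hF_succ : ∀ n, F (n + 1) = F n ++ [step (F n)] := fun n => rfl
  let w : ℕ → M := fun k => step (F k)
  -- F k lists exactly w 0, ..., w (k-1)
  have hF_mem : ∀ k, {x | x ∈ F k} = w '' Set.Iio k := by
    intro k
    induction k with
    | zero =>
      ext x
      simp [F, Set.mem_setOf_eq]
    | succ n ih =>
      rw [hF_succ]
      ext x
      simp only [List.mem_append, List.mem_singleton, Set.mem_setOf_eq] at *
      constructor
      · rintro (h | rfl)
        · obtain ⟨j, hj, rfl⟩ := (ih ▸ h : x ∈ w '' Set.Iio n)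
          exact ⟨j, lt_trans hj (Nat.lt_succ_self n), rfl⟩
        · exact ⟨n, Nat.lt_succ_self n, rfl⟩
      · rintro ⟨j, hj, rfl⟩
        rcases Nat.lt_succ_iff_lt_or_eq.mp hj with h | rfl
        · refine Or.inl ?_
          have : w j ∈ {y | y ∈ F n} := ih ▸ Set.mem_image_of_mem w h
          exact this
        · exact Or.inr rfl
  set P : ℕ → Submodule R M := fun k => N0 ⊔ span R (w '' Set.Iio k) with hP
  have hP_spec : ∀ k r, r • w k ∈ P k ↔ r ∈ p := by
    intro k r
    have := step_spec (F k) r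
    rwa [hF_mem k] at this
  have hP_mono : Monotone P := by
    intro a b hab
    exact sup_le_sup_left (span_mono (Set.image_mono fun x hx => lt_of_lt_of_le hx hab)) N0
  have hw_memP : ∀ j k, j < k → w j ∈ P k := by
    intro j k hjk
    exact le_sup_right (α := Submodule R M) (subset_span (Set.mem_image_of_mem w hjk))
  -- scaled witnesses
  set u : ℕ → R := fun k => ∏ l ∈ Finset.range k, g l with hu
  have hu_notp : ∀ k, u k ∉ p := by
    intro k hk
    obtain ⟨l, -, hl⟩ := (Ideal.IsPrime.prod_mem_iff (hp := hp)).mp hk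
    exact hgp l hl
  have hu_split : ∀ j k, j ≤ k → u k = u j * ∏ l ∈ Finset.Ico j k, g l := by
    intro j k hjk
    rw [hu]
    exact (Finset.prod_range_mul_prod_Ico g hjk).symm
  set v : ℕ → M := fun k => u k • w k with hv
  have hv_memP : ∀ j k, j < k → v j ∈ P k := fun j k hjk =>
    Submodule.smul_mem _ _ (hw_memP j k hjk)
  have hVle : ∀ k, N0 ⊔ span R (v '' Set.Iio k) ≤ P k := by
    intro k
    refine sup_le le_sup_left (span_le.mpr ?_)
    rintro x ⟨j, hj, rfl⟩
    exact hv_memP j k hj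
  -- (α): colon of the v-span at stage k is exactly p
  have halpha : ∀ k a, a • v k ∈ N0 ⊔ span R (v '' Set.Iio k) → a ∈ p := by
    intro k a ha
    have h1 : (a * u k) • w k ∈ P k := by
      rw [mul_smul]
      exact hVle k ha
    have := (hP_spec k (a * u k)).mp h1
    rcases hp.mem_or_mem this with h | h
    · exact h
    · exact absurd h (hu_notp k)
  -- the submodules K m
  set K : ℕ → Submodule R M := fun m => Nat.rec N0 (fun m Km => Km ⊔ (q m • span R {v m})) m
    with hK
  have hK_succ : ∀ m, K (m + 1) = K m ⊔ (q m • span R {v m}) := fun m => rfl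
  have hK_mono : Monotone K := by
    apply monotone_nat_of_le_succ
    intro m
    rw [hK_succ]
    exact le_sup_left
  have hK_le : ∀ m, K m ≤ N0 ⊔ span R (v '' Set.Iio m) := by
    intro m
    induction m with
    | zero => exact le_sup_left
    | succ n ih =>
      rw [hK_succ]
      refine sup_le (le_trans ih (sup_le_sup_left
        (span_mono (Set.image_mono fun x hx => lt_trans hx (Nat.lt_succ_self n))) N0)) ?_
      refine le_trans Submodule.smul_le_right ?_
      refine le_trans (span_mono ?_) le_sup_right
      rintro x rfl
      exact Set.mem_image_of_mem v (Nat.lt_succ_self n)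
  have hqvK : ∀ j m, j < m → q j • span R {v j} ≤ K m := by
    intro j m hjm
    have : q j • span R {v j} ≤ K (j + 1) := by
      rw [hK_succ]; exact le_sup_right
    exact le_trans this (hK_mono hjm)
  have hN0K : ∀ m, N0 ≤ K m := fun m => hK_mono (Nat.zero_le m)
  -- (β): p • v k lands in K k
  have hbeta : ∀ k, ∀ b ∈ p, b • v k ∈ K k := by
    intro k b hb
    have h1 : b • w k ∈ P k := (hP_spec k b).mpr hb
    rw [hP] at h1
    obtain ⟨n, hn, y, hy, hny⟩ := Submodule.mem_sup.mp h1
    obtain ⟨nn, f, gg, hrep⟩ := Submodule.mem_span_set'.mp hy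
    have key : b • v k = u k • n + ∑ i : Fin nn, (f i * u k) • (gg i : M) := by
      calc b • v k = u k • (b • w k) := by
            show b • u k • w k = u k • b • w k
            rw [smul_comm]
        _ = u k • (n + y) := by rw [hny]
        _ = u k • n + u k • y := smul_add _ _ _
        _ = u k • n + ∑ i : Fin nn, (f i * u k) • (gg i : M) := by
            rw [← hrep, Finset.smul_sum]
            congr 1
            refine Finset.sum_congr rfl fun i _ => ?_
            rw [mul_comm, mul_smul]
    rw [key]
    refine Submodule.add_mem _ (hN0K k (N0.smul_mem _ hn)) (Submodule.sum_mem _ ?_)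
    intro i _
    obtain ⟨j, hj, hgg⟩ := (gg i).2
    have hcoef : f i * u k = (f i * ∏ l ∈ Finset.Ico j k, g l) * u j := by
      rw [hu_split j k (le_of_lt hj)]; ring
    have hmemq : (f i * ∏ l ∈ Finset.Ico j k, g l) ∈ q j := by
      refine Ideal.mul_mem_left _ _ ?_
      have hdvd : g j ∣ ∏ l ∈ Finset.Ico j k, g l :=
        Finset.dvd_prod_of_mem g (Finset.mem_Ico.mpr ⟨le_refl j, hj⟩)
      obtain ⟨kk, hkk⟩ := hdvd
      rw [hkk]
      exact Ideal.mul_mem_right _ _ (hgq j)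
    have hterm : (f i * u k) • (gg i : M) = (f i * ∏ l ∈ Finset.Ico j k, g l) • v j := by
      rw [hcoef, mul_smul]
      show _ = (f i * ∏ l ∈ Finset.Ico j k, g l) • u j • w j
      rw [← hgg]
    rw [hterm]
    exact hqvK j k hj (Submodule.smul_mem_smul hmemq (mem_span_singleton_self _))
  -- main induction
  have hmain : ∀ m i a, a • v i ∈ K m → a ∈ q i := by
    intro m
    induction m with
    | zero =>
      intro i a ha
      have h2 : a • v i ∈ N0 ⊔ span R (v '' Set.Iio i) :=
        (le_sup_left : N0 ≤ N0 ⊔ span R (v '' Set.Iio i)) ha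
      exact (hqgt i).le (halpha i a h2)
    | succ n ih =>
      intro i a ha
      by_cases hni : n < i
      · have h2 : a • v i ∈ N0 ⊔ span R (v '' Set.Iio i) := by
          refine (le_trans (hK_le (n+1)) (sup_le_sup_left
            (span_mono (Set.image_mono fun x hx => lt_of_lt_of_le hx (Nat.succ_le_of_lt hni))) N0)) ha
        exact (hqgt i).le (halpha i a h2)
      push_neg at hni
      rw [hK_succ] at ha
      obtain ⟨y, hy, z, hz, hyz⟩ := Submodule.mem_sup.mp ha
      obtain ⟨b, hb, hbv⟩ := Submodule.mem_smul_span_singleton.mp hz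
      rcases eq_or_lt_of_le hni with rfl | hin
      · -- i = n
        have h1 : (a - b) • v i = y := by
          rw [sub_smul, ← hyz, hbv]
          abel
        have h2 : a - b ∈ p := by
          refine halpha i (a - b) ?_
          rw [h1]
          exact hK_le i hy
        have : a = (a - b) + b := by ring
        rw [this]
        exact (q i).add_mem ((hqgt i).le h2) hb
      · -- i < n
        have hyK : y ∈ N0 ⊔ span R (v '' Set.Iio n) := hK_le n hy
        have havi : a • v i ∈ N0 ⊔ span R (v '' Set.Iio n) :=
          (le_sup_right : span R (v '' Set.Iio n) ≤ N0 ⊔ span R (v '' Set.Iio n))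
            (Submodule.smul_mem _ a (subset_span (Set.mem_image_of_mem v hin)))
        have hbvn : b • v n ∈ N0 ⊔ span R (v '' Set.Iio n) := by
          have hzz : b • v n = a • v i - y := by
            rw [hbv, ← hyz]; abel
          rw [hzz]
          exact Submodule.sub_mem _ havi hyK
        have hbp : b ∈ p := halpha n b hbvn
        have hzK : z ∈ K n := by rw [← hbv]; exact hbeta n b hbp
        have : a • v i ∈ K n := by rw [← hyz]; exact Submodule.add_mem _ hy hzK
        exact ih i a this
  -- the limit submodule
  set KK : Submodule R M := ⨆ m, K m with hKK
  have hKKmem : ∀ x : M, x ∈ KK ↔ ∃ m, x ∈ K m := fun x =>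
    Submodule.mem_iSup_of_directed K hK_mono.directed_le
  have hcolon : ∀ i a, a • v i ∈ KK ↔ a ∈ q i := by
    intro i a
    constructor
    · intro ha
      obtain ⟨m, hm⟩ := (hKKmem _).mp ha
      exact hmain m i a hm
    · intro ha
      refine (hKKmem _).mpr ⟨i + 1, ?_⟩
      exact hqvK i (i + 1) (Nat.lt_succ_self i)
        (Submodule.smul_mem_smul ha (mem_span_singleton_self _))
  refine ⟨KK, ?_⟩
  apply Set.infinite_of_injective_forall_mem (f := q) hqinj
  intro i
  refine mem_ass_iff'.mpr ⟨(hqprime i), Submodule.Quotient.mk (v i), ?_⟩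
  ext a
  rw [mem_annihilator_span_singleton, ← Submodule.Quotient.mk_smul,
    Submodule.Quotient.mk_eq_zero]
  exact (hcolon i a).symm

theorem fsf_of_wl [IsNoetherianRing R]
    (hWL : ∀ K : Submodule R M, (associatedPrimes R (M ⧸ K)).Finite) :
    ∃ N : Submodule R M, N.FG ∧ (Module.support R (M ⧸ N)).Finite := by
  classical
  -- supports of quotients are closed
  have hclosed : ∀ N : Submodule R M, IsClosed (Module.support R (M ⧸ N)) := by
    intro N
    rw [supp_eq_biUnion]
    exact Set.Finite.isClosed_biUnion (hWL N)
      (fun p _ => PrimeSpectrum.isClosed_zeroLocus _)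
  -- pick a minimal support among FG submodules via Noetherianity of R
  haveI : IsNoetherian R R := ‹IsNoetherianRing R›
  set 𝒥 : Set (Ideal R) := {J | ∃ N : Submodule R M, N.FG ∧
    J = PrimeSpectrum.vanishingIdeal (Module.support R (M ⧸ N))} with h𝒥
  have h𝒥ne : 𝒥.Nonempty := ⟨_, ⊥, Submodule.fg_bot, rfl⟩
  obtain ⟨Jstar, hJmem, hJmax⟩ :=
    (wellFoundedGT (R := R) (M := R)).wf.has_min 𝒥 h𝒥ne
  obtain ⟨N0, hN0fg, hJ⟩ := hJmem
  -- every FG submodule above N0 has the same support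
  have hsupp_mono : ∀ N : Submodule R M, N0 ≤ N →
      Module.support R (M ⧸ N) ⊆ Module.support R (M ⧸ N0) := by
    intro N hN
    apply Module.support_subset_of_surjective (mapQ N0 N LinearMap.id hN)
    intro z
    obtain ⟨x, rfl⟩ := Submodule.Quotient.mk_surjective _ z
    exact ⟨Submodule.Quotient.mk x, by simp [mapQ_apply]⟩
  have hXmin : ∀ N : Submodule R M, N.FG → N0 ≤ N →
      Module.support R (M ⧸ N) = Module.support R (M ⧸ N0) := by
    intro N hNfg hN
    have hsub := hsupp_mono N hN
    have hvge : Jstar ≤ PrimeSpectrum.vanishingIdeal (Module.support R (M ⧸ N)) := by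
      rw [hJ]
      exact PrimeSpectrum.vanishingIdeal_anti_mono hsub
    have hnotgt := hJmax _ ⟨N, hNfg, rfl⟩
    have hveq : PrimeSpectrum.vanishingIdeal (Module.support R (M ⧸ N)) = Jstar := by
      by_contra hne
      exact hnotgt (lt_of_le_of_ne hvge (Ne.symm hne))
    calc Module.support R (M ⧸ N)
        = PrimeSpectrum.zeroLocus
            ↑(PrimeSpectrum.vanishingIdeal (Module.support R (M ⧸ N))) := by
          rw [PrimeSpectrum.zeroLocus_vanishingIdeal_eq_closure,
            (hclosed N).closure_eq]
      _ = PrimeSpectrum.zeroLocus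
            ↑(PrimeSpectrum.vanishingIdeal (Module.support R (M ⧸ N0))) := by
          rw [hveq, hJ]
      _ = Module.support R (M ⧸ N0) := by
          rw [PrimeSpectrum.zeroLocus_vanishingIdeal_eq_closure,
            (hclosed N0).closure_eq]
  by_cases hfin : (Module.support R (M ⧸ N0)).Finite
  · exact ⟨N0, hN0fg, hfin⟩
  exfalso
  -- find a minimal associated prime of M/N0 whose zero locus is infinite
  set A := associatedPrimes R (M ⧸ N0) with hA
  have hAfin : A.Finite := hWL N0
  have hbig : ∃ q0 ∈ A, (PrimeSpectrum.zeroLocus (q0 : Set R)).Infinite := by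
    by_contra hcon
    push_neg at hcon
    apply hfin
    rw [supp_eq_biUnion]
    exact Set.Finite.biUnion hAfin hcon
  obtain ⟨q0, hq0A, hq0inf⟩ := hbig
  -- minimal element of {q ∈ A | q ≤ q0}
  have hBfin : {q ∈ A | q ≤ q0}.Finite := hAfin.subset (Set.sep_subset _ _)
  obtain ⟨p, hpmin'⟩ := Finset.exists_minimal (s := hBfin.toFinset)
    ⟨q0, hBfin.mem_toFinset.mpr ⟨hq0A, le_refl _⟩⟩
  have hpB := hpmin'.prop
  have hpmin : ∀ x ∈ hBfin.toFinset, ¬ x < p := fun x hx hlt =>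
    lt_irrefl _ (lt_of_lt_of_le hlt (hpmin'.le_of_le hx hlt.le))
  rw [Set.Finite.mem_toFinset] at hpB
  obtain ⟨hpA, hpq0⟩ := hpB
  have hpprime : p.IsPrime := hpA.isPrime
  -- minimality of p within the support X0
  have hminX : ∀ p' : Ideal R, p' ∈ A → p' ≤ p → p' = p := by
    intro p' hp'A hp'le
    have : p' ∈ {q ∈ A | q ≤ q0} := ⟨hp'A, le_trans hp'le hpq0⟩
    have hnotlt := hpmin p' (hBfin.mem_toFinset.mpr this)
    by_contra hne
    exact hnotlt (lt_of_le_of_ne hp'le hne)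
  -- infinitely many primes strictly above p
  have hVinf : {q : PrimeSpectrum R | p < q.asIdeal}.Infinite := by
    have hsub : PrimeSpectrum.zeroLocus (q0 : Set R) \ {⟨p, hpprime⟩} ⊆
        {q : PrimeSpectrum R | p < q.asIdeal} := by
      rintro x ⟨hx1, hx2⟩
      have hle : p ≤ x.asIdeal := le_trans hpq0
        ((PrimeSpectrum.mem_zeroLocus _ _).mp hx1)
      refine lt_of_le_of_ne hle ?_
      intro heq
      exact hx2 (by
        simp only [Set.mem_singleton_iff]
        exact PrimeSpectrum.ext heq.symm)
    exact Set.Infinite.mono hsub (hq0inf.diff (Set.finite_singleton _))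
  -- persistence of p
  have hPers : ∀ N : Submodule R M, N.FG → N0 ≤ N → p ∈ associatedPrimes R (M ⧸ N) := by
    intro N hNfg hN
    have hpPt : (⟨p, hpprime⟩ : PrimeSpectrum R) ∈ Module.support R (M ⧸ N) := by
      rw [hXmin N hNfg hN, supp_eq_biUnion]
      exact Set.mem_biUnion hpA ((PrimeSpectrum.mem_zeroLocus _ _).mpr (le_refl _))
    obtain ⟨p', hp'Ass, hp'le⟩ := supp_exists_ass_le hpPt
    have hp'X0 : (⟨p', hp'Ass.isPrime⟩ : PrimeSpectrum R) ∈
        Module.support R (M ⧸ N0) := by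
      rw [← hXmin N hNfg hN]
      exact ass_mem_supp hp'Ass
    rw [supp_eq_biUnion] at hp'X0
    obtain ⟨q'', hq''⟩ := Set.mem_iUnion.mp hp'X0
    obtain ⟨hq''A, hq''mem⟩ := Set.mem_iUnion.mp hq''
    have hq''le : q'' ≤ p' := (PrimeSpectrum.mem_zeroLocus _ _).mp hq''mem
    have hq''eq : q'' = p := hminX q'' hq''A (le_trans hq''le hp'le)
    have : p' = p := le_antisymm hp'le (hq''eq ▸ hq''le)
    rwa [← this]
  obtain ⟨K, hK⟩ := not_wl_of_persistent hN0fg hpprime hVinf hPers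
  exact hK (hWL K)

end StmtAux

end StmtAuxiliary

variable (R : Type u) [CommRing R]

/-- The `i`-th Ext module `Ext^i_R(N, M)` of `R`-modules. -/
noncomputable def extModule (i : ℕ) (N M : ModuleCat.{u} R) : ModuleCat.{u} R :=
  ((Ext R (ModuleCat.{u} R) i).obj (Opposite.op N)).obj M

/-- A module is weakly Laskerian if every quotient has finitely many associated primes. -/
def IsWeaklyLaskerian (M : Type u) [AddCommGroup M] [Module R M] : Prop :=
  ∀ N : Submodule R M, (associatedPrimes R (M ⧸ N)).Finite

/-- `M` is `𝔞`-cofinite: `Supp M ⊆ V(𝔞)` and all `Ext^i_R(R/𝔞, M)` are finitely generated. -/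
def IsCofinite (𝔞 : Ideal R) (M : ModuleCat.{u} R) : Prop :=
  Module.support R M ⊆ PrimeSpectrum.zeroLocus (𝔞 : Set R) ∧
    ∀ i : ℕ, Module.Finite R (extModule R i (ModuleCat.of R (R ⧸ 𝔞)) M)

/-- `M` is `𝔞`-weakly cofinite: `Supp M ⊆ V(𝔞)` and all `Ext^i_R(R/𝔞, M)` are weakly
Laskerian. -/
def IsWeaklyCofinite (𝔞 : Ideal R) (M : ModuleCat.{u} R) : Prop :=
  Module.support R M ⊆ PrimeSpectrum.zeroLocus (𝔞 : Set R) ∧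
    ∀ i : ℕ, IsWeaklyLaskerian R (extModule R i (ModuleCat.of R (R ⧸ 𝔞)) M)

/-- The Krull dimension of the support of a module. -/
noncomputable def suppDim (M : Type u) [AddCommGroup M] [Module R M] : WithBot ℕ∞ :=
  Order.krullDim (Module.support R M)

/-- The cohomological dimension `cd(𝔞, M) = sup {i | H^i_𝔞(M) ≠ 0}`, as an element of `ℕ∞`. -/
noncomputable def cohomologicalDim (𝔞 : Ideal R) (M : ModuleCat.{u} R) : ℕ∞ :=
  ⨆ i ∈ {i : ℕ | Nontrivial ((localCohomology 𝔞 i).obj M)}, (i : ℕ∞)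

/-- `p` is an attached prime of `M`: `p` is prime and is the annihilator of a quotient
of `M`. -/
def IsAttachedPrime (M : Type u) [AddCommGroup M] [Module R M] (p : Ideal R) : Prop :=
  p.IsPrime ∧ ∃ N : Submodule R M, p = Module.annihilator R (M ⧸ N)

/-- A module over a Noetherian ring is weakly Laskerian iff it has a finitely generated
submodule with finite support of the quotient. -/
theorem stmt0 [IsNoetherianRing R] (M : Type u) [AddCommGroup M] [Module R M] :
    IsWeaklyLaskerian R M ↔
      ∃ N : Submodule R M, N.FG ∧ (Module.support R (M ⧸ N)).Finite := by
  constructor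
  · intro h
    exact StmtAux.fsf_of_wl (fun K => h K)
  · rintro ⟨N, hfg, hfin⟩ K
    exact StmtAux.wl_of_fsf hfg hfin K
end

section
/- Let (R,𝔪) be a Noetherian local ring, A an Artinian R-module, and 𝔞 an ideal of R. If Hom_R(R/𝔞, A) is a finitely generated R-module, then every attached prime of A containing 𝔞 equals 𝔪, i.e., V(𝔞) ∩ Att_R(A) ⊆ {𝔪}. -/
open CategoryTheory

universe u

variable (R : Type u) [CommRing R]

section Aux

variable {R : Type u} [CommRing R] {A : Type u} [AddCommGroup A] [Module R A]

/-- `Hom(R/𝔞, A)` finitely generated implies the `𝔞`-torsion submodule is finitely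
generated. -/
lemma finite_torsionBySet_of_finite_hom (𝔞 : Ideal R)
    (h : Module.Finite R ((R ⧸ 𝔞) →ₗ[R] A)) :
    Module.Finite R (Submodule.torsionBySet R A (𝔞 : Set R)) := by
  set K := Submodule.torsionBySet R A (𝔞 : Set R)
  have hmem : ∀ f : (R ⧸ 𝔞) →ₗ[R] A, f 1 ∈ K := by
    intro f
    rw [Submodule.mem_torsionBySet_iff]
    rintro ⟨a, ha⟩
    have h1 : (a : R) • (1 : R ⧸ 𝔞) = 0 := by
      have h2 : (1 : R ⧸ 𝔞) = Submodule.Quotient.mk (1 : R) := rfl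
      rw [h2, ← Submodule.Quotient.mk_smul, smul_eq_mul, mul_one,
        Submodule.Quotient.mk_eq_zero]
      exact ha
    calc (a : R) • f 1 = f ((a : R) • (1 : R ⧸ 𝔞)) := (map_smul f _ _).symm
    _ = 0 := by rw [h1, map_zero]
  let ev : ((R ⧸ 𝔞) →ₗ[R] A) →ₗ[R] K :=
    LinearMap.codRestrict K (LinearMap.applyₗ (1 : R ⧸ 𝔞)) hmem
  have hsurj : Function.Surjective ev := by
    rintro ⟨a, ha⟩
    have hker : 𝔞 ≤ LinearMap.ker (LinearMap.toSpanSingleton R A a) := by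
      intro r hr
      rw [LinearMap.mem_ker, LinearMap.toSpanSingleton_apply]
      exact (Submodule.mem_torsionBySet_iff _ _).mp ha ⟨r, hr⟩
    refine ⟨Submodule.liftQ 𝔞 (LinearMap.toSpanSingleton R A a) hker, ?_⟩
    apply Subtype.ext
    show Submodule.liftQ 𝔞 (LinearMap.toSpanSingleton R A a) hker 1 = a
    have : (1 : R ⧸ 𝔞) = Submodule.Quotient.mk (1 : R) := rfl
    rw [this, Submodule.liftQ_apply, LinearMap.toSpanSingleton_apply, one_smul]
  exact Module.Finite.of_surjective ev hsurj

/-- If the `𝔞`-torsion submodule is Noetherian, so is the `𝔞^k`-torsion submodule. -/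
lemma isNoetherian_torsionBySet_pow [IsNoetherianRing R] (𝔞 : Ideal R)
    (hK : IsNoetherian R (Submodule.torsionBySet R A (𝔞 : Set R))) (k : ℕ) :
    IsNoetherian R (Submodule.torsionBySet R A ((𝔞 ^ k : Ideal R) : Set R)) := by
  induction k with
  | zero =>
    have hbot : Submodule.torsionBySet R A ((𝔞 ^ 0 : Ideal R) : Set R) = ⊥ := by
      apply eq_bot_iff.mpr
      intro a ha
      have h1 : (1 : R) ∈ (𝔞 ^ 0 : Ideal R) := by
        rw [pow_zero, Ideal.one_eq_top]; exact Submodule.mem_top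
      have := (Submodule.mem_torsionBySet_iff _ _).mp ha ⟨1, h1⟩
      simpa using this
    rw [hbot]
    infer_instance
  | succ k ih =>
    set T := Submodule.torsionBySet R A ((𝔞 ^ (k + 1) : Ideal R) : Set R) with hT
    set T' := Submodule.torsionBySet R A ((𝔞 ^ k : Ideal R) : Set R) with hT'
    obtain ⟨F, hF⟩ := (IsNoetherian.noetherian 𝔞 : 𝔞.FG)
    have hFmem : ∀ i : F, (i : R) ∈ 𝔞 := fun i => hF ▸ Submodule.subset_span i.2
    have hcomp : ∀ (i : F) (s : T), (i : R) • (s : A) ∈ T' := by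
      intro i s
      rw [Submodule.mem_torsionBySet_iff]
      rintro ⟨r, hr⟩
      have hmul : r * (i : R) ∈ (𝔞 ^ (k + 1) : Ideal R) := by
        rw [pow_succ]
        exact Ideal.mul_mem_mul hr (hFmem i)
      have := (Submodule.mem_torsionBySet_iff _ _).mp s.2 ⟨r * (i : R), hmul⟩
      rwa [mul_smul] at this
    let c : ∀ _ : F, T →ₗ[R] T' := fun i =>
      LinearMap.codRestrict T' ((LinearMap.lsmul R A (i : R)).comp T.subtype)
        (fun s => hcomp i s)
    let ψ : T →ₗ[R] (F → T') := LinearMap.pi c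
    have hkerK : ∀ s : T, s ∈ LinearMap.ker ψ → (s : A) ∈
        Submodule.torsionBySet R A (𝔞 : Set R) := by
      intro s hs
      rw [LinearMap.mem_ker] at hs
      have hcomps : ∀ i : F, (i : R) • (s : A) = 0 := by
        intro i
        have := congrFun hs i
        have h2 : ((c i) s : A) = 0 := by rw [show (c i) s = ψ s i from rfl, this]; rfl
        exact h2
      rw [Submodule.mem_torsionBySet_iff]
      rintro ⟨r, hr⟩
      have hr' : r ∈ Submodule.span R (F : Set R) := by rw [hF]; exact hr
      show r • (s : A) = 0
      clear hr
      induction hr' using Submodule.span_induction with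
      | mem y hy => exact hcomps ⟨y, hy⟩
      | zero => rw [zero_smul]
      | add y z _ _ hy hz => rw [add_smul, hy, hz, add_zero]
      | smul t y _ hy => rw [smul_eq_mul, mul_smul, hy, smul_zero]
    haveI : IsNoetherian R (LinearMap.ker ψ) := by
      refine isNoetherian_of_injective
        (LinearMap.codRestrict (Submodule.torsionBySet R A (𝔞 : Set R))
          (T.subtype.comp (LinearMap.ker ψ).subtype) (fun s => hkerK s.1 s.2)) ?_
      intro a b hab
      have := congrArg Subtype.val hab
      exact Subtype.ext (Subtype.ext this)
    haveI : IsNoetherian R (F → T') := by infer_instance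
    exact isNoetherian_of_range_eq_ker (LinearMap.ker ψ).subtype ψ
      (Submodule.range_subtype _)

end Aux
theorem stmt1 [IsNoetherianRing R] [IsLocalRing R] (A : Type u) [AddCommGroup A] [Module R A]
    [IsArtinian R A] (𝔞 : Ideal R) (h : Module.Finite R ((R ⧸ 𝔞) →ₗ[R] A)) :
    ∀ p : Ideal R, IsAttachedPrime R A p → 𝔞 ≤ p → p = IsLocalRing.maximalIdeal R := by
  rintro p ⟨hp, N, hpN⟩ h𝔞p
  by_contra hne
  have hple : p ≤ IsLocalRing.maximalIdeal R := IsLocalRing.le_maximalIdeal hp.ne_top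
  obtain ⟨x, hxm, hxp⟩ : ∃ x, x ∈ IsLocalRing.maximalIdeal R ∧ x ∉ p := by
    by_contra hc
    push_neg at hc
    exact hne (le_antisymm hple hc)
  -- elements of p send A into N
  have hNmem : ∀ y ∈ p, ∀ a : A, y • a ∈ N := by
    intro y hy a
    have hy' : y ∈ Module.annihilator R (A ⧸ N) := hpN ▸ hy
    have := Module.mem_annihilator.mp hy' (Submodule.Quotient.mk a)
    rwa [← Submodule.Quotient.mk_smul, Submodule.Quotient.mk_eq_zero] at this
  -- powers of x do not send A into N
  have hpow : ∀ k : ℕ, ∃ a : A, x ^ k • a ∉ N := by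
    intro k
    by_contra hc
    push_neg at hc
    have hxk : x ^ k ∈ p := by
      rw [hpN]
      refine Module.mem_annihilator.mpr fun m => ?_
      obtain ⟨a, rfl⟩ := Submodule.Quotient.mk_surjective N m
      rw [← Submodule.Quotient.mk_smul, Submodule.Quotient.mk_eq_zero]
      exact hc a
    rcases Nat.eq_zero_or_pos k with rfl | hk
    · rw [pow_zero] at hxk
      exact hp.ne_top (Ideal.eq_top_of_isUnit_mem p hxk isUnit_one)
    · exact hxp (hp.mem_of_pow_mem k hxk)
  -- the family of submodules not eventually pushed into N by powers of x
  set 𝒮 : Set (Submodule R A) := {S | ∀ k : ℕ, ∃ a ∈ S, x ^ k • a ∉ N} with h𝒮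
  have htop : (⊤ : Submodule R A) ∈ 𝒮 := by
    intro k
    obtain ⟨a, ha⟩ := hpow k
    exact ⟨a, Submodule.mem_top, ha⟩
  obtain ⟨S, hS𝒮, hSmin⟩ := IsArtinian.set_has_minimal 𝒮 ⟨⊤, htop⟩
  -- x • S = S
  have hxS : Submodule.map (LinearMap.lsmul R A x) S = S := by
    have hmem : Submodule.map (LinearMap.lsmul R A x) S ∈ 𝒮 := by
      intro k
      obtain ⟨a, haS, ha⟩ := hS𝒮 (k + 1)
      refine ⟨x • a, Submodule.mem_map.mpr ⟨a, haS, rfl⟩, ?_⟩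
      rwa [smul_smul, ← pow_succ]
    have hle : Submodule.map (LinearMap.lsmul R A x) S ≤ S := by
      rintro _ ⟨a, haS, rfl⟩
      exact S.smul_mem x haS
    by_contra hne'
    exact hSmin _ hmem (lt_of_le_of_ne hle hne')
  -- every element of 𝔞 is nilpotent on S
  have hnil : ∀ y ∈ 𝔞, ∃ n : ℕ, ∀ s ∈ S, y ^ n • s = 0 := by
    intro y hy
    have hyp : y ∈ p := h𝔞p hy
    set C : ℕ → Submodule R A := fun k => Submodule.map (LinearMap.lsmul R A (y ^ k)) S
      with hC
    have hmono : ∀ k j : ℕ, C (k + j) ≤ C k := by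
      intro k j
      induction j with
      | zero => exact le_rfl
      | succ j ihj =>
        refine le_trans ?_ ihj
        rintro _ ⟨a, haS, rfl⟩
        refine Submodule.mem_map.mpr ⟨y • a, S.smul_mem y haS, ?_⟩
        show y ^ (k + j) • y • a = y ^ (k + j + 1) • a
        rw [smul_smul, ← pow_succ]
    obtain ⟨_, ⟨n, rfl⟩, hmin⟩ := IsArtinian.set_has_minimal (Set.range C) ⟨C 0, 0, rfl⟩
    have hstab : ∀ j : ℕ, C (n + j) = C n := by
      intro j
      by_contra hne'
      exact hmin (C (n + j)) ⟨n + j, rfl⟩ (lt_of_le_of_ne (hmono n j) hne')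
    set m := n + 1 with hm
    have hkey : C m = C (m + m) := by
      rw [show m + m = n + (m + 1) by omega, hstab (m + 1), hm, hstab 1]
    set S₂ := S ⊓ LinearMap.ker (LinearMap.lsmul R A (y ^ m)) with hS₂def
    have hS₂𝒮 : S₂ ∈ 𝒮 := by
      intro k
      obtain ⟨s, hsS, hs⟩ := hS𝒮 k
      have hsm : y ^ m • s ∈ C (m + m) := by
        rw [← hkey]
        exact Submodule.mem_map.mpr ⟨s, hsS, rfl⟩
      obtain ⟨u, huS, hu⟩ := Submodule.mem_map.mp hsm
      have hu' : y ^ (m + m) • u = y ^ m • s := hu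
      refine ⟨s - y ^ m • u, ?_, ?_⟩
      · refine Submodule.mem_inf.mpr ⟨S.sub_mem hsS (S.smul_mem _ huS), ?_⟩
        rw [LinearMap.mem_ker]
        show y ^ m • (s - y ^ m • u) = 0
        rw [smul_sub, smul_smul, ← pow_add, hu', sub_self]
      · intro hcon
        have hterm : x ^ k • (y ^ m • u) ∈ N := by
          have : x ^ k • (y ^ m • u) = y • ((x ^ k * y ^ n) • u) := by
            rw [smul_smul, smul_smul, hm]; ring_nf
          rw [this]
          exact hNmem y hyp _
        have : x ^ k • s ∈ N := by
          have hsplit : x ^ k • s = x ^ k • (s - y ^ m • u) + x ^ k • (y ^ m • u) := by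
            rw [← smul_add, sub_add_cancel]
          rw [hsplit]
          exact N.add_mem hcon hterm
        exact hs this
    have hS₂eq : S₂ = S := by
      by_contra hne'
      exact hSmin _ hS₂𝒮 (lt_of_le_of_ne inf_le_left hne')
    refine ⟨m, fun s hs => ?_⟩
    have : s ∈ S₂ := hS₂eq ▸ hs
    exact (Submodule.mem_inf.mp this).2
  -- hence 𝔞 lies in the radical of the annihilator of S
  have hann : 𝔞 ≤ (Submodule.annihilator S).radical := by
    intro y hy
    obtain ⟨n, hn⟩ := hnil y hy
    exact Ideal.mem_radical_iff.mpr ⟨n, Submodule.mem_annihilator.mpr hn⟩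
  obtain ⟨cpow, hcpow⟩ :=
    Ideal.exists_pow_le_of_le_radical_of_fg hann (IsNoetherian.noetherian 𝔞)
  -- S is contained in the 𝔞^cpow-torsion, which is Noetherian
  have hStors : S ≤ Submodule.torsionBySet R A ((𝔞 ^ cpow : Ideal R) : Set R) := by
    intro s hs
    rw [Submodule.mem_torsionBySet_iff]
    rintro ⟨r, hr⟩
    exact Submodule.mem_annihilator.mp (hcpow hr) s hs
  haveI hKfin : Module.Finite R (Submodule.torsionBySet R A (𝔞 : Set R)) :=
    finite_torsionBySet_of_finite_hom 𝔞 h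
  haveI hKnoeth : IsNoetherian R (Submodule.torsionBySet R A (𝔞 : Set R)) :=
    isNoetherian_of_isNoetherianRing_of_finite R _
  haveI hTnoeth : IsNoetherian R (Submodule.torsionBySet R A ((𝔞 ^ cpow : Ideal R) : Set R)) :=
    isNoetherian_torsionBySet_pow 𝔞 hKnoeth cpow
  -- hence S is finitely generated
  have hSfg : S.FG := by
    set T := Submodule.torsionBySet R A ((𝔞 ^ cpow : Ideal R) : Set R)
    have hfg : (Submodule.comap T.subtype S).FG := IsNoetherian.noetherian _
    have := hfg.map T.subtype
    rwa [Submodule.map_comap_subtype, inf_eq_right.mpr hStors] at this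
  -- Nakayama forces S = ⊥
  have hSbot : S = ⊥ := by
    refine Submodule.eq_bot_of_le_smul_of_le_jacobson_bot (IsLocalRing.maximalIdeal R) S hSfg
      ?_ ?_
    · intro s hs
      rw [← hxS] at hs
      obtain ⟨a, haS, rfl⟩ := Submodule.mem_map.mp hs
      exact Submodule.smul_mem_smul hxm haS
    · rw [IsLocalRing.jacobson_eq_maximalIdeal ⊥ bot_ne_top]
  -- contradiction with S ∈ 𝒮
  obtain ⟨a, haS, ha⟩ := hS𝒮 0
  rw [hSbot, Submodule.mem_bot] at haS
  rw [haS, pow_zero, one_smul] at ha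
  exact ha N.zero_mem
end

section
/- Let (R,𝔪) be a Noetherian local ring, A an Artinian R-module, and x ∈ R an element such that every attached prime of A containing x equals 𝔪 (i.e., V(Rx) ∩ Att_R(A) ⊆ {𝔪}). Then the R-module A/xA has finite length. -/
open CategoryTheory

universe u

section AuxLemmasForStmt2

open Submodule IsLocalRing

variable {R : Type u} [CommRing R]

/-- An Artinian module killed by the maximal ideal has finite length. -/
lemma flOfMaxKills [IsLocalRing R] (M : Type u) [AddCommGroup M] [Module R M] [IsArtinian R M]
    (h0 : ∀ r ∈ maximalIdeal R, ∀ m : M, r • m = 0) : IsFiniteLength R M := by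
  have hss : IsSemisimpleModule R M := by
    rw [← sSup_simples_eq_top_iff_isSemisimpleModule, eq_top_iff]
    intro m _
    rcases eq_or_ne m 0 with rfl | hm
    · exact zero_mem _
    refine SetLike.le_def.mp (le_sSup ?_) (mem_span_singleton_self m)
    show IsSimpleModule R (span R {m})
    have hker : LinearMap.ker (LinearMap.toSpanSingleton R M m) = maximalIdeal R := by
      refine le_antisymm (le_maximalIdeal fun htop => hm ?_) fun r hr => ?_
      · have h1 : (1 : R) ∈ LinearMap.ker (LinearMap.toSpanSingleton R M m) := by
          rw [htop]; trivial
        simpa using h1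
      · exact LinearMap.mem_ker.mpr (by simpa using h0 r hr m)
    exact isSimpleModule_iff_quot_maximal.mpr
      ⟨_, hker ▸ maximalIdeal.isMaximal R,
        ⟨(LinearEquiv.ofEq _ _ (LinearMap.span_singleton_eq_range R M m)).trans
          (LinearMap.quotKerEquivRange (LinearMap.toSpanSingleton R M m)).symm⟩⟩
  exact (IsSemisimpleModule.finite_tfae.out 3 2).mpr ‹_›

/-- An Artinian module killed by a power of the maximal ideal has finite length. -/
lemma flOfMaxPowKills [IsLocalRing R] (n : ℕ) (M : Type u) [AddCommGroup M] [Module R M]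
    [IsArtinian R M] (h0 : maximalIdeal R ^ n ≤ Module.annihilator R M) :
    IsFiniteLength R M := by
  induction n generalizing M with
  | zero =>
    have hz : ∀ m : M, m = 0 := fun m => by
      have h1 : (1 : R) ∈ Module.annihilator R M := h0 (by simp)
      simpa using Module.mem_annihilator.mp h1 m
    have : Subsingleton M := ⟨fun a b => by rw [hz a, hz b]⟩
    exact .of_subsingleton
  | succ n ih =>
    set S : Submodule R M := maximalIdeal R • ⊤ with hSdef
    have hkill : ∀ r ∈ maximalIdeal R ^ n, ∀ s ∈ S, r • s = 0 := by
      intro r hr s hs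
      refine Submodule.smul_induction_on hs (fun a ha x _ => ?_) (fun x y hx hy => ?_)
      · rw [smul_smul]
        exact Module.mem_annihilator.mp
          (h0 (by rw [pow_succ]; exact Ideal.mul_mem_mul hr ha)) x
      · rw [smul_add, hx, hy, add_zero]
    have hS : IsFiniteLength R S := by
      refine ih S ?_
      intro r hr
      rw [Module.mem_annihilator]
      rintro ⟨s, hs⟩
      exact Subtype.ext (by simpa using hkill r hr s hs)
    have hQ : IsFiniteLength R (M ⧸ S) := by
      refine flOfMaxKills (M ⧸ S) fun r hr q => ?_
      obtain ⟨m, rfl⟩ := Submodule.Quotient.mk_surjective S q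
      rw [← Submodule.Quotient.mk_smul, Submodule.Quotient.mk_eq_zero]
      exact smul_mem_smul hr trivial
    obtain ⟨hS1, hS2⟩ := isFiniteLength_iff_isNoetherian_isArtinian.mp hS
    obtain ⟨hQ1, hQ2⟩ := isFiniteLength_iff_isNoetherian_isArtinian.mp hQ
    exact isFiniteLength_iff_isNoetherian_isArtinian.mpr
      ⟨(isNoetherian_iff_submodule_quotient S).mpr ⟨hS1, hQ1⟩,
       (isArtinian_iff_submodule_quotient S).mpr ⟨hS2, hQ2⟩⟩



open Submodule

variable {R : Type u} [CommRing R]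
variable {M : Type u} [AddCommGroup M] [Module R M]

lemma mem_span_singleton_smul {b : R} {S : Submodule R M} {x : M} :
    x ∈ Ideal.span {b} • S ↔ ∃ t ∈ S, b • t = x := by
  constructor
  · intro hx
    refine Submodule.smul_induction_on hx ?_ ?_
    · rintro r hr n hn
      obtain ⟨c, rfl⟩ := Ideal.mem_span_singleton'.mp hr
      exact ⟨c • n, S.smul_mem c hn, by rw [smul_smul, mul_comm]⟩
    · rintro x y ⟨t, ht, rfl⟩ ⟨u, hu, rfl⟩
      exact ⟨t + u, S.add_mem ht hu, smul_add _ _ _⟩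
  · rintro ⟨t, ht, rfl⟩
    exact Submodule.smul_mem_smul (Ideal.mem_span_singleton_self b) ht

/-- Iterating `span {a} • S = S`. -/
lemma spanPowSmul (a : R) (S : Submodule R M) (h : Ideal.span {a} • S = S) (k : ℕ) :
    Ideal.span {a ^ k} • S = S := by
  induction k with
  | zero => simp [Ideal.span_singleton_one]
  | succ k ih =>
    rw [pow_succ, ← Ideal.span_singleton_mul_span_singleton, ← Ideal.smul_eq_mul,
      Submodule.smul_assoc, h, ih]

/-- Every submodule of an Artinian module is a finite sup of "secondary-like" submodules. -/
lemma secDecomp [IsArtinian R M] (S : Submodule R M) :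
    ∃ s : Finset (Submodule R M),
      (∀ T ∈ s, ∀ a : R, Ideal.span {a} • T = T ∨ ∃ k, ∀ t ∈ T, a ^ k • t = 0) ∧
        s.sup id = S := by
  classical
  by_contra hS
  set C : Set (Submodule R M) := {S | ¬ ∃ s : Finset (Submodule R M),
    (∀ T ∈ s, ∀ a : R, Ideal.span {a} • T = T ∨ ∃ k, ∀ t ∈ T, a ^ k • t = 0) ∧
      s.sup id = S} with hC
  obtain ⟨S₀, hS₀, hmin⟩ := IsArtinian.set_has_minimal C ⟨S, hS⟩
  have hdec : ∀ N : Submodule R M, N < S₀ → ∃ s : Finset (Submodule R M),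
      (∀ T ∈ s, ∀ a : R, Ideal.span {a} • T = T ∨ ∃ k, ∀ t ∈ T, a ^ k • t = 0) ∧
        s.sup id = N := by
    intro N hN
    by_contra hNc
    exact hmin N hNc hN
  by_cases hsec : ∀ a : R, Ideal.span {a} • S₀ = S₀ ∨ ∃ k, ∀ t ∈ S₀, a ^ k • t = 0
  · exact hS₀ ⟨{S₀}, by simpa using hsec, by simp⟩
  push_neg at hsec
  obtain ⟨a, ha1, ha2⟩ := hsec
  -- descending chain `span {a^(k+1)} • S₀` stabilizes
  obtain ⟨N₁, ⟨n, hn⟩, hNmin⟩ := IsArtinian.set_has_minimal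
    {N | ∃ k : ℕ, N = Ideal.span {a ^ (k + 1)} • S₀} ⟨_, 0, rfl⟩
  have hstep : ∀ k : ℕ, Ideal.span {a ^ (k + 2)} • S₀ ≤ Ideal.span {a ^ (k + 1)} • S₀ := by
    intro k
    refine Submodule.smul_le.mpr fun r hr t ht => ?_
    obtain ⟨c, rfl⟩ := Ideal.mem_span_singleton'.mp hr
    have : c * a ^ (k + 2) = (c * a) * a ^ (k + 1) := by ring
    rw [this]
    exact Submodule.smul_mem_smul (Ideal.mem_span_singleton'.mpr ⟨c * a, rfl⟩) ht
  have hstab : Ideal.span {a ^ (n + 2)} • S₀ = Ideal.span {a ^ (n + 1)} • S₀ := by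
    subst hn
    refine le_antisymm (hstep n) ?_
    by_contra hlt
    exact hNmin _ ⟨n + 1, rfl⟩ (lt_of_le_of_ne (hstep n) fun h => hlt h.ge)
  -- hence span {a^(n+1)} • S₀ is stable under multiplication by a, so:
  have hstab2 : Ideal.span {a ^ (2 * (n + 1))} • S₀ = Ideal.span {a ^ (n + 1)} • S₀ := by
    have key : ∀ j : ℕ, Ideal.span {a ^ (j + n + 1)} • S₀ = Ideal.span {a ^ (n + 1)} • S₀ := by
      intro j
      induction j with
      | zero => norm_num
      | succ j ih =>
        have e1 : a ^ (j + 1 + n + 1) = a * a ^ (j + n + 1) := by ring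
        have e2 : a ^ (n + 2) = a * a ^ (n + 1) := by ring
        rw [e1, ← Ideal.span_singleton_mul_span_singleton, ← Ideal.smul_eq_mul,
          Submodule.smul_assoc, ih, ← Submodule.smul_assoc, Ideal.smul_eq_mul,
          Ideal.span_singleton_mul_span_singleton, ← e2, hstab]
    have := key (n + 1)
    rwa [show n + 1 + n + 1 = 2 * (n + 1) by ring] at this
  set m := n + 1 with hm
  set I : Submodule R M := Ideal.span {a ^ m} • S₀ with hI
  set K : Submodule R M := S₀ ⊓ LinearMap.ker (LinearMap.lsmul R M (a ^ m)) with hKdef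
  have hsum : S₀ = K ⊔ I := by
    refine le_antisymm ?_ (sup_le inf_le_left Submodule.smul_le_right)
    intro s hs
    have h1 : a ^ m • s ∈ Ideal.span {a ^ (2 * m)} • S₀ := by
      rw [hstab2]
      exact Submodule.smul_mem_smul (Ideal.mem_span_singleton_self _) hs
    obtain ⟨t, ht, h2⟩ := mem_span_singleton_smul.mp h1
    have hdecomp : s = (s - a ^ m • t) + a ^ m • t := (sub_add_cancel _ _).symm
    have hk : s - a ^ m • t ∈ K := by
      refine Submodule.mem_inf.mpr ⟨?_, ?_⟩
      · exact Submodule.sub_mem _ hs (Submodule.smul_mem _ _ ht)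
      · rw [LinearMap.mem_ker, LinearMap.lsmul_apply, smul_sub, smul_smul, ← pow_add, show m + m = 2 * m by ring, ← h2]
        exact sub_self _
    have hi : a ^ m • t ∈ I :=
      Submodule.smul_mem_smul (Ideal.mem_span_singleton_self _) ht
    rw [hdecomp]
    exact Submodule.add_mem_sup hk hi
  have hKlt : K < S₀ := by
    refine lt_of_le_of_ne inf_le_left fun h => ?_
    obtain ⟨t, ht, hat⟩ := ha2 m
    exact hat ((h.symm ▸ ht : t ∈ K)).2
  have hIlt : I < S₀ := by
    refine lt_of_le_of_ne Submodule.smul_le_right fun h => ?_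
    apply ha1
    have h1 : Ideal.span {a ^ 1} • S₀ = S₀ := by
      refine le_antisymm Submodule.smul_le_right ?_
      calc S₀ = Ideal.span {a ^ m} • S₀ := h.symm
        _ ≤ Ideal.span {a ^ 1} • S₀ := by
            refine Submodule.smul_mono ?_ le_rfl
            rw [Ideal.span_singleton_le_span_singleton]
            exact ⟨a ^ n, by rw [hm]; ring⟩
    simpa [pow_one] using h1
  obtain ⟨sK, hsK1, hsK2⟩ := hdec K hKlt
  obtain ⟨sI, hsI1, hsI2⟩ := hdec I hIlt
  refine hS₀ ⟨sK ∪ sI, fun T hT => ?_, ?_⟩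
  · rcases Finset.mem_union.mp hT with h | h
    · exact hsK1 T h
    · exact hsI1 T h
  · rw [Finset.sup_union, hsK2, hsI2, hsum]

end AuxLemmasForStmt2


variable (R : Type u) [CommRing R]

theorem stmt2 [IsNoetherianRing R] [IsLocalRing R] (A : Type u) [AddCommGroup A] [Module R A]
    [IsArtinian R A] (x : R)
    (h : ∀ p : Ideal R, IsAttachedPrime R A p → x ∈ p → p = IsLocalRing.maximalIdeal R) :
    IsFiniteLength R (A ⧸ (Ideal.span {x} • ⊤ : Submodule R A)) := by
  classical
  set K : Submodule R A := Ideal.span {x} • ⊤ with hKdef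
  by_contra hM
  have hxM : ∀ m : A ⧸ K, x • m = 0 := by
    intro m
    obtain ⟨a, rfl⟩ := Submodule.Quotient.mk_surjective K m
    rw [← Submodule.Quotient.mk_smul, Submodule.Quotient.mk_eq_zero]
    exact Submodule.smul_mem_smul (Ideal.mem_span_singleton_self x) trivial
  obtain ⟨s, hsec, hsup⟩ := secDecomp (⊤ : Submodule R (A ⧸ K))
  obtain ⟨J, hJmem, hJmin⟩ := Finset.exists_min_image
    ((s.powerset).filter fun t => t.sup id = ⊤) Finset.card
    ⟨s, Finset.mem_filter.mpr ⟨Finset.mem_powerset_self s, hsup⟩⟩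
  rw [Finset.mem_filter, Finset.mem_powerset] at hJmem
  obtain ⟨hJs, hJsup⟩ := hJmem
  by_cases hcase : ∀ T ∈ J, ∀ a ∈ IsLocalRing.maximalIdeal R, ∃ k, ∀ t ∈ T, a ^ k • t = 0
  · apply hM
    have hrad : IsLocalRing.maximalIdeal R ≤ (Module.annihilator R (A ⧸ K)).radical := by
      intro a ha
      have key : ∀ t : Finset (Submodule R (A ⧸ K)), (∀ T ∈ t, ∃ k, ∀ m ∈ T, a ^ k • m = 0) →
          ∃ k, ∀ m ∈ t.sup id, a ^ k • m = 0 := by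
        intro t
        induction t using Finset.induction_on with
        | empty =>
          intro _
          exact ⟨0, fun m hm => by
            simp only [Finset.sup_empty, Submodule.mem_bot] at hm
            simp [hm]⟩
        | @insert T t' hT ih =>
          intro hall
          obtain ⟨k1, hk1⟩ := hall T (Finset.mem_insert_self T t')
          obtain ⟨k2, hk2⟩ := ih fun U hU => hall U (Finset.mem_insert_of_mem hU)
          refine ⟨k1 + k2, fun m hm => ?_⟩
          rw [Finset.sup_insert] at hm
          obtain ⟨y, hy, z, hz, rfl⟩ := Submodule.mem_sup.mp hm
          have hy0 : a ^ (k1 + k2) • y = 0 := by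
            rw [pow_add, mul_comm, mul_smul, hk1 y hy, smul_zero]
          have hz0 : a ^ (k1 + k2) • z = 0 := by
            rw [pow_add, mul_smul, hk2 z hz, smul_zero]
          rw [smul_add, hy0, hz0, add_zero]
      obtain ⟨k, hk⟩ := key J fun T hT => hcase T hT a ha
      exact Ideal.mem_radical_iff.mpr ⟨k, Module.mem_annihilator.mpr fun m =>
        hk m (hJsup ▸ Submodule.mem_top)⟩
    obtain ⟨n, hn⟩ := Ideal.exists_pow_le_of_le_radical_of_fg hrad (IsNoetherian.noetherian _)
    exact flOfMaxPowKills n (A ⧸ K) hn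
  push_neg at hcase
  obtain ⟨T, hTJ, a, haM, hak⟩ := hcase
  have haT : Ideal.span {a} • T = T := (hsec T (hJs hTJ) a).resolve_right (by push_neg; exact hak)
  set L : Submodule R (A ⧸ K) := (J.erase T).sup id with hLdef
  have hLne : L ≠ ⊤ := by
    intro hLtop
    have hmem : J.erase T ∈ (s.powerset).filter fun t => t.sup id = ⊤ :=
      Finset.mem_filter.mpr ⟨Finset.mem_powerset.mpr ((Finset.erase_subset T J).trans hJs), hLtop⟩
    exact absurd (hJmin _ hmem) (not_le.mpr (Finset.card_erase_lt_of_mem hTJ))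
  have hTL : T ⊔ L = ⊤ := by
    rw [← hJsup, ← Finset.insert_erase hTJ, Finset.sup_insert]
    rfl
  have hnt : Nontrivial ((A ⧸ K) ⧸ L) :=
    Submodule.Quotient.nontrivial_iff.mpr (lt_top_iff_ne_top.mpr hLne).ne
  have hmapT : Submodule.map L.mkQ T = ⊤ := by
    have h1 : Submodule.map L.mkQ L = ⊥ := by
      rw [eq_bot_iff]
      rintro y ⟨l, hl, rfl⟩
      rw [Submodule.mem_bot]
      exact (Submodule.Quotient.mk_eq_zero L).mpr hl
    have h2 : Submodule.map L.mkQ T ⊔ Submodule.map L.mkQ L = ⊤ := by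
      rw [← Submodule.map_sup, hTL, Submodule.map_top, Submodule.range_mkQ]
    rwa [h1, sup_bot_eq] at h2
  have hsurjT : ∀ m : (A ⧸ K) ⧸ L, ∃ t ∈ T, L.mkQ t = m := by
    intro m
    have : m ∈ Submodule.map L.mkQ T := hmapT ▸ Submodule.mem_top
    obtain ⟨t, ht, rfl⟩ := this
    exact ⟨t, ht, rfl⟩
  have hdich : ∀ b : R, (¬ ∃ k, ∀ m : (A ⧸ K) ⧸ L, b ^ k • m = 0) →
      Ideal.span {b} • (⊤ : Submodule R ((A ⧸ K) ⧸ L)) = ⊤ := by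
    intro b hb
    rcases hsec T (hJs hTJ) b with hbT | ⟨k, hk⟩
    · rw [← hmapT, ← Submodule.map_smul'', hbT]
    · refine absurd ⟨k, fun m => ?_⟩ hb
      obtain ⟨t, ht, rfl⟩ := hsurjT m
      rw [← LinearMap.map_smul, hk t ht, LinearMap.map_zero]
  set p : Ideal R := (Module.annihilator R ((A ⧸ K) ⧸ L)).radical with hpdef
  have hmemp : ∀ b : R, b ∈ p ↔ ∃ k, ∀ m : (A ⧸ K) ⧸ L, b ^ k • m = 0 := by
    intro b
    rw [hpdef, Ideal.mem_radical_iff]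
    exact exists_congr fun k => by rw [Module.mem_annihilator]
  have hdich' : ∀ b : R, b ∉ p → Ideal.span {b} • (⊤ : Submodule R ((A ⧸ K) ⧸ L)) = ⊤ :=
    fun b hb => hdich b fun hex => hb ((hmemp b).mpr hex)
  have hbt : (⊤ : Submodule R ((A ⧸ K) ⧸ L)) ≠ ⊥ := by
    intro e
    obtain ⟨m, m', hne⟩ := exists_pair_ne ((A ⧸ K) ⧸ L)
    apply hne
    have h1 : m ∈ (⊥ : Submodule R ((A ⧸ K) ⧸ L)) := e ▸ Submodule.mem_top
    have h2 : m' ∈ (⊥ : Submodule R ((A ⧸ K) ⧸ L)) := e ▸ Submodule.mem_top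
    rw [Submodule.mem_bot] at h1 h2
    rw [h1, h2]
  obtain ⟨N, hN⟩ := Ideal.exists_pow_le_of_le_radical_of_fg_radical
    (le_refl p) (IsNoetherian.noetherian _)
  have hpne : p • (⊤ : Submodule R ((A ⧸ K) ⧸ L)) ≠ ⊤ := by
    intro htop
    have hpow : ∀ j, p ^ j • (⊤ : Submodule R ((A ⧸ K) ⧸ L)) = ⊤ := by
      intro j
      induction j with
      | zero => simp
      | succ j ih => rw [pow_succ, ← Ideal.smul_eq_mul, Submodule.smul_assoc, htop, ih]
    have hbot : p ^ N • (⊤ : Submodule R ((A ⧸ K) ⧸ L)) = ⊥ := by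
      rw [eq_bot_iff]
      refine Submodule.smul_le.mpr fun r hr t _ => ?_
      exact (Submodule.mem_bot _).mpr (Module.mem_annihilator.mp (hN hr) t)
    rw [hpow N] at hbot
    exact hbt hbot
  have hprime : p.IsPrime := by
    rw [Ideal.isPrime_iff]
    constructor
    · intro htop
      obtain ⟨k, hk⟩ := (hmemp 1).mp (htop ▸ Submodule.mem_top)
      apply hbt
      rw [eq_bot_iff]
      intro m _
      rw [Submodule.mem_bot]
      simpa using hk m
    · intro b c hbc
      by_contra hor
      push_neg at hor
      obtain ⟨hb, hc⟩ := hor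
      apply hc
      rw [hmemp]
      obtain ⟨k, hk⟩ := (hmemp (b * c)).mp hbc
      refine ⟨k, fun m => ?_⟩
      have hm : m ∈ Ideal.span {b ^ k} • (⊤ : Submodule R ((A ⧸ K) ⧸ L)) := by
        rw [spanPowSmul b ⊤ (hdich' b hb) k]
        trivial
      obtain ⟨t, _, rfl⟩ := mem_span_singleton_smul.mp hm
      rw [smul_smul, mul_comm, ← mul_pow]
      exact hk t
  have hxTT : ∀ m : (A ⧸ K) ⧸ L, x • m = 0 := by
    intro m
    obtain ⟨q, rfl⟩ := Submodule.Quotient.mk_surjective L m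
    rw [← Submodule.Quotient.mk_smul, hxM q, Submodule.Quotient.mk_zero]
  have hxp : x ∈ p := Ideal.le_radical (Module.mem_annihilator.mpr hxTT)
  set N₀ : Submodule R ((A ⧸ K) ⧸ L) := p • ⊤ with hN₀def
  have hann : Module.annihilator R (((A ⧸ K) ⧸ L) ⧸ N₀) = p := by
    refine le_antisymm ?_ ?_
    · intro b hb
      by_contra hbp
      apply hpne
      rw [eq_top_iff, ← hdich' b hbp]
      refine Submodule.smul_le.mpr fun r hr t _ => ?_
      obtain ⟨c, rfl⟩ := Ideal.mem_span_singleton'.mp hr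
      rw [← smul_smul]
      refine Submodule.smul_mem _ c ?_
      have hmem := Module.mem_annihilator.mp hb (Submodule.Quotient.mk t : ((A ⧸ K) ⧸ L) ⧸ N₀)
      rwa [← Submodule.Quotient.mk_smul, Submodule.Quotient.mk_eq_zero] at hmem
    · intro b hb
      rw [Module.mem_annihilator]
      intro m
      obtain ⟨t, rfl⟩ := Submodule.Quotient.mk_surjective N₀ m
      rw [← Submodule.Quotient.mk_smul, Submodule.Quotient.mk_eq_zero]
      exact Submodule.smul_mem_smul hb trivial
  set g : A →ₗ[R] (((A ⧸ K) ⧸ L) ⧸ N₀) := N₀.mkQ ∘ₗ (L.mkQ ∘ₗ K.mkQ) with hgdef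
  have hgsurj : Function.Surjective g := by
    rw [hgdef]
    simp only [LinearMap.coe_comp]
    exact (Submodule.mkQ_surjective N₀).comp
      ((Submodule.mkQ_surjective L).comp (Submodule.mkQ_surjective K))
  have hattach : IsAttachedPrime R A p := by
    refine ⟨hprime, LinearMap.ker g, ?_⟩
    rw [(g.quotKerEquivOfSurjective hgsurj).annihilator_eq, hann]
  have hpm : p = IsLocalRing.maximalIdeal R := h p hattach hxp
  have hap : a ∈ p := hpm ▸ haM
  obtain ⟨k, hk⟩ := (hmemp a).mp hap
  have haTT : Ideal.span {a} • (⊤ : Submodule R ((A ⧸ K) ⧸ L)) = ⊤ := by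
    rw [← hmapT, ← Submodule.map_smul'', haT]
  have h1 : Ideal.span {a ^ k} • (⊤ : Submodule R ((A ⧸ K) ⧸ L)) = ⊤ :=
    spanPowSmul a ⊤ haTT k
  have h2 : Ideal.span {a ^ k} • (⊤ : Submodule R ((A ⧸ K) ⧸ L)) = ⊥ := by
    rw [eq_bot_iff]
    refine Submodule.smul_le.mpr fun r hr t _ => ?_
    obtain ⟨c, rfl⟩ := Ideal.mem_span_singleton'.mp hr
    rw [Submodule.mem_bot, ← smul_smul, hk t, smul_zero]
  rw [h1] at h2
  exact hbt h2
end

section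
/- Let R be a Noetherian ring, 𝔞 an ideal, and M an R-module with Supp(M) ⊆ V(𝔞) and dim Supp(M) = 0 such that Hom_R(R/𝔞, M) is weakly Laskerian. Then M is weakly Laskerian and hence 𝔞-weakly cofinite. -/
open CategoryTheory

universe u

variable (R : Type u) [CommRing R]

section Alg

variable {R}
variable {X : Type u} [AddCommGroup X] [Module R X]

lemma my_mem_support_of_assoc {q : Ideal R} (h : IsAssociatedPrime q X) :
    (⟨q, h.1⟩ : PrimeSpectrum R) ∈ Module.support R X := by
  obtain ⟨hq, x, hx⟩ := h
  exact Module.mem_support_iff_exists_annihilator.mpr ⟨x, fun r hr => hx.ge (Ideal.le_radical (by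
    rw [Submodule.mem_colon_singleton, Submodule.mem_bot]; exact (Submodule.mem_annihilator_span_singleton _ _).mp hr))⟩

lemma my_assoc_subset_support :
    associatedPrimes R X ⊆ PrimeSpectrum.asIdeal '' (Module.support R X) := by
  intro q hq
  exact ⟨⟨q, hq.1⟩, my_mem_support_of_assoc hq, rfl⟩

/-- If a module has finite support, it is weakly Laskerian. -/
lemma my_wL_of_finite_support (hfin : (Module.support R X).Finite) :
    ∀ N : Submodule R X, (associatedPrimes R (X ⧸ N)).Finite := by
  intro N
  refine ((hfin.image PrimeSpectrum.asIdeal).subset ?_)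
  refine subset_trans my_assoc_subset_support ?_
  refine Set.image_mono ?_
  exact Module.support_subset_of_surjective N.mkQ (Submodule.mkQ_surjective N)

/-- A prime minimal in the support of a module over a Noetherian ring is associated. -/
lemma my_isAssociated_of_minimal [IsNoetherianRing R] {p : PrimeSpectrum R}
    (hp : p ∈ Module.support R X)
    (hmin : ∀ q : PrimeSpectrum R, q ∈ Module.support R X → q ≤ p → q = p) :
    IsAssociatedPrime p.asIdeal X := by
  classical
  obtain ⟨m, hm⟩ := Module.mem_support_iff_exists_annihilator.mp hp
  set I : Ideal R := (R ∙ m).annihilator with hI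
  -- p is minimal over I
  have hminI : ∀ q : Ideal R, q.IsPrime → I ≤ q → q ≤ p.asIdeal → q = p.asIdeal := by
    intro q hq hIq hqp
    have : (⟨q, hq⟩ : PrimeSpectrum R) ∈ Module.support R X :=
      Module.mem_support_iff_exists_annihilator.mpr ⟨m, hIq⟩
    have := hmin ⟨q, hq⟩ this hqp
    exact congrArg PrimeSpectrum.asIdeal this
  -- the p-saturation of I
  have hone : (1 : R) ∉ p.asIdeal := fun h => p.isPrime.ne_top ((Ideal.eq_top_iff_one _).mpr h)
  set T : Ideal R :=
    { carrier := {r | ∃ s ∉ p.asIdeal, s * r ∈ I}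
      add_mem' := by
        rintro a b ⟨s, hs, hsa⟩ ⟨t, ht, htb⟩
        refine ⟨s * t, fun h => ?_, ?_⟩
        · rcases p.isPrime.mem_or_mem h with h | h
          exacts [hs h, ht h]
        · have h1 : s * t * (a + b) = t * (s * a) + s * (t * b) := by ring
          rw [h1]
          exact I.add_mem (I.mul_mem_left _ hsa) (I.mul_mem_left _ htb)
      zero_mem' := ⟨1, hone, by simpa using I.zero_mem⟩
      smul_mem' := by
        rintro c a ⟨s, hs, hsa⟩
        refine ⟨s, hs, ?_⟩
        have : s * (c • a) = c * (s * a) := by simp [smul_eq_mul]; ring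
        rw [this]
        exact I.mul_mem_left _ hsa } with hT
  have hIT : I ≤ T := fun r hr => ⟨1, hone, by simpa using hr⟩
  have hTp : T ≤ p.asIdeal := by
    rintro r ⟨s, hs, hsr⟩
    have : s * r ∈ p.asIdeal := hm hsr
    rcases p.isPrime.mem_or_mem this with h | h
    · exact absurd h hs
    · exact h
  have hIp : I ≤ p.asIdeal := le_trans hIT hTp
  -- radical of T is p
  have hradT : T.radical = p.asIdeal := by
    refine le_antisymm ?_ ?_
    · rw [← p.isPrime.radical]
      exact Ideal.radical_mono hTp
    · intro t ht
      by_contra htT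
      -- the multiplicative set {s * t^n | s ∉ p}
      set S : Submonoid R :=
        { carrier := {x | ∃ s ∉ p.asIdeal, ∃ n : ℕ, x = s * t ^ n}
          mul_mem' := by
            rintro a b ⟨s, hs, n, rfl⟩ ⟨s', hs', n', rfl⟩
            refine ⟨s * s', fun h => ?_, n + n', by ring⟩
            rcases p.isPrime.mem_or_mem h with h | h
            exacts [hs h, hs' h]
          one_mem' := ⟨1, hone, 0, by simp⟩ } with hS
      have hdisj : Disjoint (I : Set R) (S : Set R) := by
        rw [Set.disjoint_left]
        rintro x hxI ⟨s, hs, n, rfl⟩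
        exact htT ⟨n, s, hs, hxI⟩
      obtain ⟨q, hq, hIq, hqS⟩ := Ideal.exists_le_prime_disjoint I S hdisj
      have hqp : q ≤ p.asIdeal := by
        intro r hr
        by_contra hrp
        exact Set.disjoint_left.mp hqS hr ⟨r, hrp, 0, by simp⟩
      have := hminI q hq hIq hqp
      exact Set.disjoint_left.mp hqS (this ▸ ht) ⟨1, hone, 1, by rw [one_mul, pow_one]⟩
  -- T is primary
  have hprimary : T.IsPrimary := by
    rw [Ideal.isPrimary_iff]
    constructor
    · intro h
      exact p.isPrime.ne_top (top_le_iff.mp (h ▸ hTp))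
    · intro x y hxy
      by_cases hy : y ∈ p.asIdeal
      · exact Or.inr (hradT ▸ hy)
      · left
        obtain ⟨s, hs, hsxy⟩ := hxy
        refine ⟨s * y, fun h => ?_, by rw [show s * y * x = s * (x * y) by ring]; exact hsxy⟩
        rcases p.isPrime.mem_or_mem h with h | h
        exacts [hs h, hy h]
  -- p is associated to R ⧸ T
  have hassT : IsAssociatedPrime p.asIdeal (R ⧸ T) := by
    have := associatedPrimes.eq_singleton_of_isPrimary hprimary
    rw [hradT] at this
    rw [← AssociatedPrimes.mem_iff, this]
    rfl
  obtain ⟨-, xbar, hx⟩ := isAssociatedPrime_iff.mp hassT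
  obtain ⟨x, rfl⟩ := Ideal.Quotient.mk_surjective xbar
  -- membership characterization : r ∈ p ↔ r * x ∈ T
  have hxchar : ∀ r : R, r ∈ p.asIdeal ↔ r * x ∈ T := by
    intro r
    rw [hx, Submodule.mem_colon_singleton, Submodule.mem_bot]
    have keq : (r • (Ideal.Quotient.mk T) x) = (Ideal.Quotient.mk T) (r * x) := by
      rw [map_mul, Algebra.smul_def, Ideal.Quotient.algebraMap_eq]
    rw [keq, Ideal.Quotient.eq_zero_iff_mem]
  -- clear denominators
  obtain ⟨G, hG⟩ : p.asIdeal.FG := IsNoetherian.noetherian _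
  have hchoose : ∀ g : R, ∃ s : R, s ∉ p.asIdeal ∧ (g ∈ G → s * (g * x) ∈ I) := by
    intro g
    by_cases hg : g ∈ G
    · have : g ∈ p.asIdeal := hG ▸ Submodule.subset_span hg
      obtain ⟨s, hs, hsgx⟩ := (hxchar g).mp this
      exact ⟨s, hs, fun _ => hsgx⟩
    · exact ⟨1, hone, fun h => absurd h hg⟩
  choose sf hsf1 hsf2 using hchoose
  set s : R := ∏ g ∈ G, sf g with hs
  have hsp : s ∉ p.asIdeal := by
    intro h
    haveI := p.isPrime
    obtain ⟨g, hg, hgp⟩ := Ideal.IsPrime.prod_mem_iff.mp h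
    exact hsf1 g hgp
  have hkey : ∀ g ∈ G, g * (s * x) ∈ I := by
    intro g hg
    have h1 : s = sf g * ∏ h ∈ G.erase g, sf h := (Finset.mul_prod_erase G sf hg).symm
    have h2 : g * (s * x) = (∏ h ∈ G.erase g, sf h) * (sf g * (g * x)) := by
      rw [h1]; ring
    rw [h2]
    exact I.mul_mem_left _ (hsf2 g hg)
  -- the witness element
  refine isAssociatedPrime_iff.mpr ⟨p.isPrime, (s * x) • m, ?_⟩
  ext r
  rw [Submodule.mem_colon_singleton, Submodule.mem_bot]
  constructor
  · intro hr
    have hrg : r ∈ Submodule.span R (G : Set R) := by rw [← hG] at hr; exact hr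
    have hcol : r ∈ Submodule.colon I (Submodule.span R {s * x}) := by
      refine (Submodule.span_le.mpr ?_) hrg
      intro g hg
      rw [SetLike.mem_coe, Submodule.mem_colon_span_singleton]
      exact hkey g hg
    rw [Submodule.mem_colon_span_singleton, smul_eq_mul] at hcol
    rw [hI, Submodule.mem_annihilator_span_singleton] at hcol
    rw [smul_smul]
    exact hcol
  · intro hr
    rw [smul_smul] at hr
    have hrI : r * (s * x) ∈ I := by
      rw [hI, Submodule.mem_annihilator_span_singleton]
      exact hr
    have hrT : r * x ∈ T := ⟨s, hsp, by rw [show s * (r * x) = r * (s * x) by ring]; exact hrI⟩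
    exact (hxchar r).mpr hrT

end Alg

section Supp

variable {R}

lemma my_support_hom_subset (X M : Type u) [AddCommGroup X] [Module R X]
    [AddCommGroup M] [Module R M] [Module.Finite R X] :
    Module.support R (X →ₗ[R] M) ⊆ Module.support R M := by
  classical
  intro p hp
  by_contra hpM
  rw [Module.notMem_support_iff'] at hpM
  rw [Module.mem_support_iff'] at hp
  obtain ⟨φ, hφ⟩ := hp
  obtain ⟨n, g, hg⟩ := Module.Finite.exists_fin (R := R) (M := X)
  choose rf hrf1 hrf2 using fun i : Fin n => hpM (φ (g i))
  set r : R := ∏ i, rf i with hr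
  have hrp : r ∉ p.asIdeal := by
    intro h
    haveI := p.isPrime
    obtain ⟨i, -, hip⟩ := Ideal.IsPrime.prod_mem_iff.mp h
    exact hrf1 i hip
  refine hφ r hrp ?_
  have hvanish : ∀ i, (r • φ) (g i) = 0 := by
    intro i
    have h1 : r = rf i * ∏ j ∈ Finset.univ.erase i, rf j :=
      (Finset.mul_prod_erase _ _ (Finset.mem_univ i)).symm
    rw [LinearMap.smul_apply, h1, mul_comm, mul_smul, hrf2 i, smul_zero]
  have hker : (⊤ : Submodule R X) ≤ LinearMap.ker (r • φ) := by
    rw [← hg, Submodule.span_le]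
    rintro _ ⟨i, rfl⟩
    exact LinearMap.mem_ker.mpr (hvanish i)
  exact LinearMap.ext fun z => LinearMap.mem_ker.mp (hker Submodule.mem_top)

lemma my_supp_M_finite [IsNoetherianRing R] (M : Type u) [AddCommGroup M] [Module R M]
    (𝔞 : Ideal R)
    (h1 : Module.support R M ⊆ PrimeSpectrum.zeroLocus (𝔞 : Set R))
    (h2 : Order.krullDim (Module.support R M) = 0)
    (hfin : (associatedPrimes R ((R ⧸ 𝔞) →ₗ[R] M)).Finite) :
    (Module.support R M).Finite := by
  have hanti : ∀ a b : PrimeSpectrum R, a ∈ Module.support R M → b ∈ Module.support R M →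
      ¬ a < b := by
    intro a b ha hb hab
    let c : LTSeries (Module.support R M) :=
      { length := 1
        toFun := ![⟨a, ha⟩, ⟨b, hb⟩]
        step := fun i => by fin_cases i; simpa using hab }
    have hle := Order.LTSeries.length_le_krullDim c
    rw [h2] at hle
    norm_num [c] at hle
  have himg : PrimeSpectrum.asIdeal '' (Module.support R M) ⊆
      associatedPrimes R ((R ⧸ 𝔞) →ₗ[R] M) := by
    rintro - ⟨p, hp, rfl⟩
    have hmin : ∀ q : PrimeSpectrum R, q ∈ Module.support R M → q ≤ p → q = p := by
      intro q hq hle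
      by_contra hne
      exact hanti q p hq hp (lt_of_le_of_ne hle hne)
    have hassM := my_isAssociated_of_minimal hp hmin
    have h𝔞p : 𝔞 ≤ p.asIdeal := by
      have := h1 hp
      rw [PrimeSpectrum.mem_zeroLocus] at this
      exact this
    obtain ⟨hpr, x, hx⟩ := isAssociatedPrime_iff.mp hassM
    have hxann : ∀ r : R, r • x = 0 ↔ r ∈ p.asIdeal := by
      intro r
      rw [hx, Submodule.mem_colon_singleton, Submodule.mem_bot]
    set φ : (R ⧸ 𝔞) →ₗ[R] M :=
      Submodule.liftQ 𝔞 (LinearMap.toSpanSingleton R M x)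
        (fun a ha => by
          rw [LinearMap.mem_ker, LinearMap.toSpanSingleton_apply]
          exact (hxann a).mpr (h𝔞p ha)) with hφdef
    refine isAssociatedPrime_iff.mpr ⟨hpr, φ, ?_⟩
    ext r
    rw [Submodule.mem_colon_singleton, Submodule.mem_bot]
    constructor
    · intro hr
      refine LinearMap.ext fun z => ?_
      obtain ⟨c, rfl⟩ := Submodule.mkQ_surjective 𝔞 z
      rw [LinearMap.smul_apply, Submodule.mkQ_apply, hφdef, Submodule.liftQ_apply,
        LinearMap.toSpanSingleton_apply, smul_comm, (hxann r).mpr hr, smul_zero,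
        LinearMap.zero_apply]
    · intro hr
      have := congrArg (fun ψ : (R ⧸ 𝔞) →ₗ[R] M => ψ (Submodule.Quotient.mk 1)) hr
      simp only [LinearMap.smul_apply, LinearMap.zero_apply, hφdef] at this
      rw [show (Submodule.Quotient.mk (1 : R) : R ⧸ 𝔞) = Submodule.mkQ 𝔞 1 from rfl] at this
      rw [Submodule.mkQ_apply, Submodule.liftQ_apply, LinearMap.toSpanSingleton_apply,
        one_smul] at this
      exact (hxann r).mp this
  exact Set.Finite.of_finite_image (hfin.subset himg)
    (Set.injOn_of_injective (fun a b h => PrimeSpectrum.ext h))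

end Supp

section Resolution

open CategoryTheory Limits

noncomputable def myCov (X : ModuleCat.{u} R) :
    Σ' (n : ℕ) (f : ModuleCat.of R (Fin n → R) ⟶ X),
      (Module.Finite R X → Function.Surjective f) :=
  Classical.choice <| by
    by_cases h : Module.Finite R X
    · obtain ⟨n, f, hf⟩ := @Module.Finite.exists_fin' R X _ _ _ h
      exact ⟨⟨n, ModuleCat.ofHom f, fun _ => hf⟩⟩
    · exact ⟨⟨0, 0, fun h' => absurd h' h⟩⟩

noncomputable def myCovObj (X : ModuleCat.{u} R) : ModuleCat.{u} R :=
  ModuleCat.of R (Fin (myCov R X).1 → R)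

noncomputable def myπ (X : ModuleCat.{u} R) : myCovObj R X ⟶ X := (myCov R X).2.1

lemma myπ_surj (X : ModuleCat.{u} R) [Module.Finite R X] :
    Function.Surjective (myπ R X) := (myCov R X).2.2 ‹_›

instance myCovObj_finite (X : ModuleCat.{u} R) : Module.Finite R (myCovObj R X) :=
  inferInstanceAs (Module.Finite R (Fin (myCov R X).1 → R))

instance myCovObj_projective (X : ModuleCat.{u} R) : Projective (myCovObj R X) :=
  ModuleCat.projective_of_free (Pi.basisFun R (Fin (myCov R X).1))

noncomputable def myKer {X Y : ModuleCat.{u} R} (f : X ⟶ Y) : ModuleCat.{u} R :=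
  ModuleCat.of R (LinearMap.ker f.hom)

instance myKer_finite [IsNoetherianRing R] {X Y : ModuleCat.{u} R} (f : X ⟶ Y)
    [Module.Finite R X] : Module.Finite R (myKer R f) := by
  haveI : IsNoetherian R X := isNoetherian_of_isNoetherianRing_of_finite R X
  exact inferInstanceAs (Module.Finite R (LinearMap.ker f.hom))

noncomputable def myd {X Y : ModuleCat.{u} R} (f : X ⟶ Y) : myCovObj R (myKer R f) ⟶ X :=
  myπ R (myKer R f) ≫ ModuleCat.ofHom (LinearMap.ker f.hom).subtype

lemma myd_comp {X Y : ModuleCat.{u} R} (f : X ⟶ Y) : myd R f ≫ f = 0 := by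
  apply ModuleCat.hom_ext
  apply LinearMap.ext
  intro x
  exact (myπ R (myKer R f) x).2

lemma myExact [IsNoetherianRing R] {X Y : ModuleCat.{u} R} (f : X ⟶ Y) [Module.Finite R X] :
    (ShortComplex.mk (myd R f) f (myd_comp R f)).Exact := by
  rw [ShortComplex.moduleCat_exact_iff]
  intro x hx
  obtain ⟨y, hy⟩ := myπ_surj R (myKer R f) (⟨x, hx⟩ : LinearMap.ker f.hom)
  exact ⟨y, congrArg Subtype.val hy⟩

variable (Z : ModuleCat.{u} R)

noncomputable def myComplex : ChainComplex (ModuleCat.{u} R) ℕ :=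
  ChainComplex.mk' (myCovObj R Z) (myCovObj R (myKer R (myπ R Z))) (myd R (myπ R Z))
    (fun f => ⟨myCovObj R (myKer R f), myd R f, myd_comp R f⟩)

instance myComplex_projective (n : ℕ) : Projective ((myComplex R Z).X n) := by
  obtain (_ | _ | _ | n) := n <;> apply myCovObj_projective

instance myComplex_finite (n : ℕ) : Module.Finite R ((myComplex R Z).X n) := by
  obtain (_ | _ | _ | n) := n <;> apply myCovObj_finite

lemma myComplex_d_1_0 : (myComplex R Z).d 1 0 = myd R (myπ R Z) := by
  simp [myComplex]

lemma myComplex_exactAt_succ [IsNoetherianRing R] (n : ℕ) :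
    (myComplex R Z).ExactAt (n + 1) := by
  rw [HomologicalComplex.exactAt_iff' _ (n + 1 + 1) (n + 1) n (by simp) (by simp)]
  dsimp [myComplex, HomologicalComplex.sc', HomologicalComplex.shortComplexFunctor',
      ChainComplex.mk', ChainComplex.mk]
  match n with
  | 0 => exact @myExact R _ _ _ _ _ (myCovObj_finite R _)
  | 1 => exact @myExact R _ _ _ _ _ (myCovObj_finite R _)
  | n + 2 =>
    show ((myComplex R Z).sc' (n + 2 + 2) (n + 2 + 1) (n + 2)).Exact
    have hd : (myComplex R Z).d (n + 2 + 2) (n + 2 + 1) =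
        (ChainComplex.mk'XIso (myCovObj R Z) (myCovObj R (myKer R (myπ R Z))) (myd R (myπ R Z))
      (fun f => ⟨myCovObj R (myKer R f), myd R f, myd_comp R f⟩) (n + 2)).hom ≫ myd R ((myComplex R Z).d (n + 2 + 1) (n + 2)) :=
      ChainComplex.mk'_d _ _ _ _ (n + 2)
    rw [ShortComplex.moduleCat_exact_iff]
    intro x hx
    have e := (ShortComplex.moduleCat_exact_iff _).1
      (myExact R ((myComplex R Z).d (n + 2 + 1) (n + 2)))
    change ((myComplex R Z).d (n + 2 + 1) (n + 2)) x = 0 at hx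
    obtain ⟨y, hy⟩ := e x hx
    refine ⟨(ChainComplex.mk'XIso (myCovObj R Z) (myCovObj R (myKer R (myπ R Z))) (myd R (myπ R Z))
      (fun f => ⟨myCovObj R (myKer R f), myd R f, myd_comp R f⟩) (n + 2)).inv y, ?_⟩
    change ((myComplex R Z).d (n + 2 + 2) (n + 2 + 1)) _ = x
    rw [hd]
    exact (congrArg (fun z => myd R ((myComplex R Z).d (n + 2 + 1) (n + 2)) z)
      (Iso.inv_hom_id_apply _ y)).trans hy


noncomputable def myRes [IsNoetherianRing R] [Module.Finite R Z] : ProjectiveResolution Z where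
  complex := myComplex R Z
  π := (ChainComplex.toSingle₀Equiv _ _).symm ⟨myπ R Z, by
          rw [myComplex_d_1_0]; exact myd_comp R (myπ R Z)⟩
  quasiIso := ⟨fun n => by
    cases n with
    | zero =>
      rw [ChainComplex.quasiIsoAt₀_iff, ShortComplex.quasiIso_iff_of_zeros']
      · refine (ShortComplex.exact_and_epi_g_iff_of_iso ?_).2
          ⟨myExact R (myπ R Z), ModuleCat.epi_iff_surjective _ |>.mpr (myπ_surj R Z)⟩
        exact ShortComplex.isoMk (Iso.refl _) (Iso.refl _) (Iso.refl _)
          (by exact (Category.id_comp _).trans (Category.comp_id _).symm)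
            (by exact (Category.id_comp _).trans (Category.comp_id _).symm)
      all_goals rfl
    | succ n =>
      rw [quasiIsoAt_iff_exactAt']
      · apply myComplex_exactAt_succ
      · apply ChainComplex.exactAt_succ_single_obj⟩

end Resolution

section ExtSupp

open CategoryTheory

lemma my_ext_supp [IsNoetherianRing R] (Z M : ModuleCat.{u} R) [Module.Finite R Z] (i : ℕ) :
    Module.support R (extModule R i Z M) ⊆ Module.support R M := by
  haveI : ∀ n, Module.Finite R ((myRes R Z).complex.X n) := fun n => myComplex_finite R Z n
  set K := (myRes R Z).complex.linearYonedaObj R M with hK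
  have e : extModule R i Z M ≃ₗ[R] (K.sc i).moduleCatLeftHomologyData.H :=
    ((myRes R Z).isoExt i M).toLinearEquiv.trans ((K.sc i).moduleCatHomologyIso).toLinearEquiv
  rw [show Module.support R (extModule R i Z M)
      = Module.support R ((K.sc i).moduleCatLeftHomologyData.H) from e.support_eq]
  refine subset_trans (Module.support_subset_of_surjective _
    (Submodule.mkQ_surjective (LinearMap.range (K.sc i).moduleCatToCycles))) ?_
  refine subset_trans (Module.support_subset_of_injective
    (LinearMap.ker (K.sc i).g.hom).subtype Subtype.val_injective) ?_
  rw [show Module.support R ((K.sc i).X₂) = Module.support R (((myRes R Z).complex.X i) →ₗ[R] M) from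
    ModuleCat.homLinearEquiv.support_eq]
  exact my_support_hom_subset ((myRes R Z).complex.X i) M

end ExtSupp

theorem stmt19 [IsNoetherianRing R] (𝔞 : Ideal R) (M : ModuleCat.{u} R)
    (h1 : Module.support R M ⊆ PrimeSpectrum.zeroLocus (𝔞 : Set R))
    (h2 : suppDim R M = 0)
    (h3 : IsWeaklyLaskerian R ((R ⧸ 𝔞) →ₗ[R] M)) :
    IsWeaklyLaskerian R M ∧ IsWeaklyCofinite R 𝔞 M := by
  haveI : Module.Finite R (ModuleCat.of R (R ⧸ 𝔞)) := inferInstanceAs (Module.Finite R (R ⧸ 𝔞))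
  have hass : (associatedPrimes R ((R ⧸ 𝔞) →ₗ[R] M)).Finite := by
    have := h3 ⊥
    rwa [LinearEquiv.AssociatedPrimes.eq (Submodule.quotEquivOfEqBot ⊥ rfl)] at this
  have hfin : (Module.support R M).Finite := my_supp_M_finite (↥M) 𝔞 h1 h2 hass
  constructor
  · exact my_wL_of_finite_support hfin
  · refine ⟨h1, fun i => ?_⟩
    exact my_wL_of_finite_support (hfin.subset (my_ext_supp R (ModuleCat.of R (R ⧸ 𝔞)) M i))
end
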